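/- arXiv:1711.00621 — 10 statements merged into one kernel-verified Lean document; each statement's English description precedes it below -/
import Mathlib

section
/- Let a ∈ ℝ, b > 0, and λ ∈ ℂ with Im λ > 0. Then there exists exactly one complex number K with Im K > 0 satisfying K · (a − λ − b² K) = 1. -/
/-- For `a ∈ ℝ`, `b > 0`, and `λ ∈ ℂ` with `Im λ > 0`, there is exactly one
complex `K` with `Im K > 0` satisfying `K (a − λ − b² K) = 1`. -/
theorem stmt6 (a : ℝ) (b : ℝ) (hb : 0 < b) (lam : ℂ) (hlam : 0 < lam.im) :
    ∃! K : ℂ, 0 < K.im ∧ K * ((a : ℂ) - lam - (b : ℂ) ^ 2 * K) = 1 := by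
  have hb2 : (0:ℝ) < b ^ 2 := by positivity
  have hbc : ((b:ℂ)) ≠ 0 := Complex.ofReal_ne_zero.2 hb.ne'
  have hb2c : ((b:ℂ)) ^ 2 ≠ 0 := pow_ne_zero 2 hbc
  -- uniqueness
  have uniq : ∀ K K' : ℂ, (0 < K.im ∧ K * ((a : ℂ) - lam - (b : ℂ) ^ 2 * K) = 1) →
      (0 < K'.im ∧ K' * ((a : ℂ) - lam - (b : ℂ) ^ 2 * K') = 1) → K' = K := by
    rintro K K' ⟨h1, h2⟩ ⟨h1', h2'⟩
    by_contra hne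
    have hfac : (K' - K) * (((a:ℂ) - lam) - (b:ℂ) ^ 2 * (K' + K)) = 0 := by
      linear_combination h2' - h2
    have h0 : ((a:ℂ) - lam) - (b:ℂ) ^ 2 * (K' + K) = 0 := by
      rcases mul_eq_zero.1 hfac with h | h
      · exact absurd (sub_eq_zero.1 h) hne
      · exact h
    have him := congrArg Complex.im h0
    simp [Complex.sub_im, Complex.add_im, Complex.mul_im, ← Complex.ofReal_pow,
      Complex.ofReal_im, Complex.ofReal_re] at him
    nlinarith [him, h1, h1', hb2, hlam]
  obtain ⟨s, hs⟩ := IsAlgClosed.exists_pow_nat_eq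
    (((a:ℂ) - lam) ^ 2 - 4 * (b:ℂ) ^ 2) (n := 2) (by norm_num)
  set K₁ : ℂ := (((a:ℂ) - lam) + s) / (2 * (b:ℂ) ^ 2) with hK₁
  set K₂ : ℂ := (((a:ℂ) - lam) - s) / (2 * (b:ℂ) ^ 2) with hK₂
  have eq₁ : K₁ * ((a : ℂ) - lam - (b : ℂ) ^ 2 * K₁) = 1 := by
    rw [hK₁]; field_simp; ring_nf; linear_combination (-1:ℂ) * hs
  have eq₂ : K₂ * ((a : ℂ) - lam - (b : ℂ) ^ 2 * K₂) = 1 := by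
    rw [hK₂]; field_simp; ring_nf; linear_combination (-1:ℂ) * hs
  have hK₁ne : K₁ ≠ 0 := by
    intro h; rw [h] at eq₁; simp at eq₁
  have hprodm : K₂ * ((b:ℂ) ^ 2 * K₁) = 1 := by
    rw [hK₁, hK₂]; field_simp; linear_combination (-1:ℂ) * hs
  have hprod : K₂ = ((b:ℂ) ^ 2 * K₁)⁻¹ := eq_inv_of_mul_eq_one_left hprodm
  have hsum' : ((b:ℂ)) ^ 2 * (K₁ + K₂) = (a:ℂ) - lam := by
    rw [hK₁, hK₂]; field_simp; ring
  have himsum : b ^ 2 * (K₁.im + K₂.im) = -lam.im := by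
    have := congrArg Complex.im hsum'
    simpa [Complex.mul_im, Complex.add_im, Complex.sub_im, ← Complex.ofReal_pow,
      Complex.ofReal_im, Complex.ofReal_re] using this
  have hns : 0 < Complex.normSq ((b:ℂ) ^ 2 * K₁) :=
    Complex.normSq_pos.2 (mul_ne_zero hb2c hK₁ne)
  have him2 : K₂.im = -(b ^ 2 * K₁.im) / Complex.normSq ((b:ℂ) ^ 2 * K₁) := by
    rw [hprod, Complex.inv_im]
    congr 2
    simp [Complex.mul_im, ← Complex.ofReal_pow, Complex.ofReal_im, Complex.ofReal_re]
  rcases lt_trichotomy K₁.im 0 with h | h | h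
  · have h2' : 0 < K₂.im := by
      rw [him2]; exact div_pos (by nlinarith) hns
    exact ⟨K₂, ⟨h2', eq₂⟩, fun K' h' => uniq K₂ K' ⟨h2', eq₂⟩ h'⟩
  · exfalso
    have : K₂.im = 0 := by rw [him2, h]; simp
    rw [h, this] at himsum
    simp at himsum
    linarith
  · exact ⟨K₁, ⟨h, eq₁⟩, fun K' h' => uniq K₁ K' ⟨h, eq₁⟩ h'⟩
end

section
/- Let a ∈ ℝ, b > 0, and λ ∈ ℂ with Im λ > 0. Define the sequence of continued-fraction approximants z_0 = 1/(a − λ) and z_{k+1} = 1/(a − λ − b² z_k). Then every z_k is well defined (all denominators are nonzero), Im z_k > 0 for all k, and z_k converges as k → ∞ to the unique complex number K with Im K > 0 satisfying K · (a − λ − b² K) = 1. -/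
open Filter

/-- For `Im λ > 0` the continued-fraction approximants
`z_0 = 1/(a−λ)`, `z_{k+1} = 1/(a − λ − b² z_k)` are well defined (all denominators
are nonzero), have positive imaginary part, and converge to the unique `K` with
`Im K > 0` and `K (a − λ − b² K) = 1`. -/
theorem stmt7 (a : ℝ) (b : ℝ) (hb : 0 < b) (lam : ℂ) (hlam : 0 < lam.im)
    (z : ℕ → ℂ)
    (hz0 : z 0 = 1 / ((a : ℂ) - lam))
    (hzrec : ∀ k : ℕ, z (k + 1) = 1 / ((a : ℂ) - lam - (b : ℂ) ^ 2 * z k)) :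
    ((a : ℂ) - lam ≠ 0) ∧
    (∀ k : ℕ, (a : ℂ) - lam - (b : ℂ) ^ 2 * z k ≠ 0) ∧
    (∀ k : ℕ, 0 < (z k).im) ∧
    ∃ K : ℂ, (0 < K.im ∧ K * ((a : ℂ) - lam - (b : ℂ) ^ 2 * K) = 1) ∧
      (∀ K' : ℂ, 0 < K'.im ∧ K' * ((a : ℂ) - lam - (b : ℂ) ^ 2 * K') = 1 → K' = K) ∧
      Tendsto z atTop (nhds K) := by
  set w : ℂ := (a : ℂ) - lam with hw
  have hwim : w.im < 0 := by
    simp [hw, Complex.sub_im]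
    exact hlam
  have hbne : (b:ℝ) ≠ 0 := ne_of_gt hb
  have hb2 : (b:ℂ)^2 ≠ 0 := pow_ne_zero 2 (by exact_mod_cast hbne)
  have hBr : (b:ℂ)^2 = ((b^2 : ℝ) : ℂ) := by push_cast; ring
  have hmulim : ∀ u : ℂ, ((b:ℂ)^2 * u).im = b^2 * u.im := by
    intro u; rw [hBr, Complex.mul_im, Complex.ofReal_re, Complex.ofReal_im]; ring
  have hinv : ∀ u : ℂ, u.im < 0 → 0 < (1/u).im := by
    intro u hu
    have hune : u ≠ 0 := fun h => by simp [h] at hu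
    rw [one_div, Complex.inv_im]
    exact div_pos (by linarith) (Complex.normSq_pos.2 hune)
  have hposim : ∀ k, 0 < (z k).im := by
    intro k; induction k with
    | zero => rw [hz0]; exact hinv _ hwim
    | succ k ih =>
      rw [hzrec]
      refine hinv _ ?_
      rw [Complex.sub_im, hmulim]
      nlinarith [sq_nonneg b]
  have hdim : ∀ k, (w - (b:ℂ)^2 * z k).im < 0 := by
    intro k; rw [Complex.sub_im, hmulim]; nlinarith [hposim k, sq_nonneg b]
  have hden : ∀ k, w - (b:ℂ)^2 * z k ≠ 0 := by
    intro k h; have := hdim k; rw [h] at this; simp at this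
  have hwne : w ≠ 0 := fun h => by rw [h] at hwim; simp at hwim
  -- roots of the quadratic
  obtain ⟨s, hs⟩ : ∃ s : ℂ, s^2 = w^2 - 4*(b:ℂ)^2 :=
    IsAlgClosed.exists_pow_nat_eq _ (by norm_num)
  set K1 : ℂ := (w + s)/(2*(b:ℂ)^2) with hK1def
  set K2 : ℂ := (w - s)/(2*(b:ℂ)^2) with hK2def
  have h4B : (4:ℂ)*(b:ℂ)^2 ≠ 0 := by
    intro h; apply hb2; linear_combination h/4
  have hK1mul : 2*(b:ℂ)^2*K1 = w + s := by
    rw [hK1def]; field_simp [show (b:ℂ) ≠ 0 by exact_mod_cast hbne]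
  have hK2mul : 2*(b:ℂ)^2*K2 = w - s := by
    rw [hK2def]; field_simp [show (b:ℂ) ≠ 0 by exact_mod_cast hbne]
  have hroot1 : K1 * (w - (b:ℂ)^2 * K1) = 1 := by
    refine mul_left_cancel₀ h4B ?_
    linear_combination (2*w - 2*(b:ℂ)^2*K1 - (w+s))*hK1mul - hs
  have hroot2 : K2 * (w - (b:ℂ)^2 * K2) = 1 := by
    refine mul_left_cancel₀ h4B ?_
    linear_combination (2*w - 2*(b:ℂ)^2*K2 - (w-s))*hK2mul - hs
  have hsumB : (b:ℂ)^2 * (K1 + K2) = w := by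
    linear_combination (hK1mul + hK2mul)/2
  have hprod : (b:ℂ)^2 * (K1 * K2) = 1 := by
    refine mul_left_cancel₀ h4B ?_
    linear_combination (2*(b:ℂ)^2*K2)*hK1mul + (w+s)*hK2mul - hs
  have hquad : ∀ X : ℂ, X * (w - (b:ℂ)^2 * X) = 1 → X = K1 ∨ X = K2 := by
    intro X hX
    have h0 : (b:ℂ)^2 * ((X - K1) * (X - K2)) = 0 := by
      linear_combination -hX - X*hsumB + hprod
    rcases mul_eq_zero.1 h0 with h | h
    · exact absurd h hb2
    · rcases mul_eq_zero.1 h with h | h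
      · exact Or.inl (sub_eq_zero.1 h)
      · exact Or.inr (sub_eq_zero.1 h)
  have hK1ne : K1 ≠ 0 := by
    intro h; rw [h] at hprod; simp at hprod
  have hK2eq : K2 = ((b:ℂ)^2 * K1)⁻¹ := by
    refine eq_inv_of_mul_eq_one_left ?_
    linear_combination hprod
  have hnsq1 : 0 < Complex.normSq K1 := Complex.normSq_pos.2 hK1ne
  have hK2im : K2.im = -K1.im / (b^2 * Complex.normSq K1) := by
    rw [hK2eq, Complex.inv_im, hmulim, map_mul, hBr, Complex.normSq_ofReal]
    rw [div_eq_div_iff (by positivity) (by positivity)]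
    ring
  have hsumim : K1.im + K2.im < 0 := by
    have h1 : (K1 + K2).im = w.im / b^2 := by
      have h2 : K1 + K2 = w / ((b^2:ℝ):ℂ) := by
        rw [← hBr, eq_div_iff hb2]; linear_combination hsumB
      rw [h2, Complex.div_ofReal_im]
    rw [← Complex.add_im, h1]
    exact div_neg_of_neg_of_pos hwim (by positivity)
  -- the distinguished pair
  obtain ⟨K, K', hrootK, hrootK', hKim, hK'im, hprodKK', hsum2, huniq⟩ :
      ∃ K K' : ℂ, K * (w - (b:ℂ)^2 * K) = 1 ∧ K' * (w - (b:ℂ)^2 * K') = 1 ∧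
        0 < K.im ∧ K'.im < 0 ∧ (b:ℂ)^2 * (K * K') = 1 ∧ K.im + K'.im < 0 ∧
        (∀ X : ℂ, X * (w - (b:ℂ)^2 * X) = 1 → X = K ∨ X = K') := by
    rcases lt_trichotomy K1.im 0 with h | h | h
    · exact ⟨K2, K1, hroot2, hroot1, by rw [hK2im]; exact div_pos (by linarith) (by positivity), h,
        by rw [mul_comm K2 K1]; exact hprod, by linarith,
        fun X hX => (hquad X hX).symm⟩
    · exfalso
      rw [h] at hK2im
      simp at hK2im
      rw [h, hK2im] at hsumim
      simp at hsumim
    · exact ⟨K1, K2, hroot1, hroot2, h,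
        by rw [hK2im]; exact div_neg_of_neg_of_pos (by linarith) (by positivity),
        hprod, by linarith, hquad⟩
  clear hroot1 hroot2 hsumB hprod hquad hK1ne hK2eq hK2im hnsq1 hs hK1def hK2def hsumim
  have hKne0 : K ≠ 0 := by intro h; rw [h] at hrootK; simp at hrootK
  have hnsqK : 0 < Complex.normSq K := Complex.normSq_pos.2 hKne0
  have hK'eq : K' = ((b:ℂ)^2 * K)⁻¹ := by
    refine eq_inv_of_mul_eq_one_left ?_
    linear_combination hprodKK'
  have hK'imeq : K'.im * (b^2 * Complex.normSq K) = -K.im := by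
    have : K'.im = -K.im / (b^2 * Complex.normSq K) := by
      rw [hK'eq, Complex.inv_im, hmulim, map_mul, hBr, Complex.normSq_ofReal]
      field_simp
    rw [this]; field_simp
  -- the multiplier
  set m : ℂ := (b:ℂ)^2 * K^2 with hmdef
  have hsm : b^2 * Complex.normSq K < 1 := by
    nlinarith [hsum2, hK'imeq, hKim, hK'im, hnsqK, sq_nonneg b]
  have hm : ‖m‖ < 1 := by
    rw [hmdef, norm_mul, norm_pow, norm_pow]
    have h1 : ‖(b:ℂ)‖ = b := by
      rw [Complex.norm_real]; exact abs_of_pos hb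
    have h2 : ‖K‖^2 = Complex.normSq K := by
      rw [Complex.sq_norm]
    rw [h1, h2]
    exact hsm
  -- auxiliary nonvanishing
  have hKne : K ≠ K' := by
    intro h; rw [h] at hKim; linarith
  have hzK' : ∀ k, z k - K' ≠ 0 := by
    intro k h
    have := congrArg Complex.im h
    rw [Complex.sub_im] at this
    simp at this
    have := hposim k
    linarith
  -- the ratio sequence
  set r : ℕ → ℂ := fun k => (z k - K)/(z k - K') with hrdef
  have hcross : ∀ k, (z (k+1) - K) * (z k - K') = m * ((z k - K) * (z (k+1) - K')) := by
    intro k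
    rw [hzrec]
    have hd := hden k
    have id1 : (1:ℂ)/(w - (b:ℂ)^2 * z k) - K = (b:ℂ)^2*K*(z k - K)/(w - (b:ℂ)^2 * z k) := by
      field_simp
      linear_combination -hrootK
    have id2 : (1:ℂ)/(w - (b:ℂ)^2 * z k) - K' = (b:ℂ)^2*K'*(z k - K')/(w - (b:ℂ)^2 * z k) := by
      field_simp
      linear_combination -hrootK'
    rw [id1, id2, hmdef]
    linear_combination (-(b:ℂ)^2*K*(z k - K)*(z k - K')/(w - (b:ℂ)^2 * z k))*hprodKK'
  have hrrec : ∀ k, r (k+1) = m * r k := by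
    intro k
    rw [hrdef]
    simp only
    rw [div_eq_iff (hzK' (k+1))]
    field_simp [hzK' k]
    linear_combination hcross k
  have hrpow : ∀ k, r k = m^k * r 0 := by
    intro k; induction k with
    | zero => simp
    | succ k ih => rw [hrrec, ih, pow_succ]; ring
  have hne1 : ∀ k, (1:ℂ) - r k ≠ 0 := by
    intro k h
    apply hKne
    have hr1 : r k = 1 := by linear_combination -h
    rw [hrdef] at hr1
    simp only at hr1
    rw [div_eq_one_iff_eq (hzK' k)] at hr1
    have := sub_right_injective hr1  -- (z k) - K = (z k) - K' → K = K'? careful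
    exact this
  have hzeq : ∀ k, z k = (K - K' * r k)/(1 - r k) := by
    intro k
    rw [eq_div_iff (hne1 k), hrdef]
    simp only
    field_simp [hzK' k]
    ring
  -- convergence
  have hrt : Tendsto r atTop (nhds 0) := by
    have h1 := (tendsto_pow_atTop_nhds_zero_of_norm_lt_one hm).mul_const (r 0)
    rw [zero_mul] at h1
    exact h1.congr (fun k => (hrpow k).symm)
  have hzt : Tendsto z atTop (nhds K) := by
    have hnum : Tendsto (fun k => K - K' * r k) atTop (nhds (K - K' * 0)) :=
      tendsto_const_nhds.sub (tendsto_const_nhds.mul hrt)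
    have hden' : Tendsto (fun k => (1:ℂ) - r k) atTop (nhds (1 - 0)) :=
      tendsto_const_nhds.sub hrt
    have := hnum.div hden' (by norm_num)
    simp only [mul_zero, sub_zero, div_one] at this
    exact this.congr (fun k => (hzeq k).symm)
  refine ⟨hwne, hden, hposim, K, ⟨hKim, hrootK⟩, ?_, hzt⟩
  intro X ⟨hX1, hX2⟩
  rcases huniq X hX2 with h | h
  · exact h
  · exfalso; rw [h] at hX1; linarith
end

section
/- Let a ∈ ℝ, b > 0, and λ ∈ ℂ with Im λ > 0. Define K = (1/(2π b²)) ∫_{a−2b}^{a+2b} √(4b² − (a−x)²)/(x − λ) dx. Then Im K > 0 and K · (a − λ − b² K) = 1; that is, the Stieltjes transform of the density f(x) = √(4b² − (a−x)²)/(2π b²) on [a−2b, a+2b] is the unique root with positive imaginary part of the quadratic equation b² K² − (a − λ) K + 1 = 0. -/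
open MeasureTheory intervalIntegral Set Complex

namespace Stmt8Aux

lemma log_neg_of_im_pos {z : ℂ} (hz : 0 < z.im) :
    Complex.log (-z) = Complex.log z - Real.pi * Complex.I := by
  apply Complex.ext
  · simp [Complex.log_re]
  · simp [Complex.log_im, Complex.arg_neg_eq_arg_sub_pi_of_im_pos hz]

lemma arg_pos_of_im_pos {z : ℂ} (hz : 0 < z.im) : 0 < z.arg := by
  rcases lt_or_eq_of_le (Complex.arg_nonneg_iff.2 hz.le) with h | h
  · exact h
  · exfalso
    have := (Complex.arg_eq_zero_iff.1 h.symm).2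
    simp [this] at hz

lemma log_mul_of_im_pos_of_im_neg {x y : ℂ} (hx : 0 < x.im) (hy : y.im < 0) :
    Complex.log (x * y) = Complex.log x + Complex.log y := by
  have hx0 : x ≠ 0 := fun h => by simp [h] at hx
  have hy0 : y ≠ 0 := fun h => by simp [h] at hy
  refine Complex.log_mul hx0 hy0 ⟨?_, ?_⟩
  · have h1 : 0 < x.arg := arg_pos_of_im_pos hx
    have h2 : -Real.pi < y.arg := Complex.neg_pi_lt_arg y
    linarith
  · have h1 : x.arg ≤ Real.pi := Complex.arg_le_pi x
    have h2 : y.arg < 0 := Complex.arg_neg_iff.2 hy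
    linarith


lemma exists_t1 (w : ℂ) (hw : 0 < w.im) :
    ∃ t₁ : ℂ, w * t₁ ^ 2 - 2 * t₁ + w = 0 ∧ t₁.im < 0 := by
  have hw0 : w ≠ 0 := fun h => by simp [h] at hw
  obtain ⟨ρ, hρ⟩ : ∃ ρ : ℂ, ρ ^ 2 = 1 - w ^ 2 :=
    ⟨(1 - w ^ 2) ^ ((2 : ℕ)⁻¹ : ℂ), by
      simpa using Complex.cpow_nat_inv_pow (1 - w ^ 2) (two_ne_zero)⟩
  have hroot : w * ((1 + ρ) / w) ^ 2 - 2 * ((1 + ρ) / w) + w = 0 := by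
    field_simp
    linear_combination hρ
  set u := (1 + ρ) / w with hu
  have hune : u.im ≠ 0 := by
    intro h
    have hu2 : u = (u.re : ℂ) := Complex.ext rfl (by simp [h])
    rw [hu2] at hroot
    have := congrArg Complex.im hroot
    simp [Complex.mul_im, Complex.sub_im, Complex.add_im, Complex.ofReal_re,
      Complex.ofReal_im, pow_two] at this
    nlinarith [sq_nonneg u.re, hw]
  have hu0 : u ≠ 0 := by
    intro h
    rw [h] at hroot
    simp at hroot
    exact hw0 hroot
  have hinv : ∀ v : ℂ, v ≠ 0 → w * v ^ 2 - 2 * v + w = 0 →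
      w * (v⁻¹) ^ 2 - 2 * v⁻¹ + w = 0 := by
    intro v hv h
    field_simp
    linear_combination h
  rcases lt_or_gt_of_ne hune with h | h
  · exact ⟨u, hroot, h⟩
  · refine ⟨u⁻¹, hinv u hu0 hroot, ?_⟩
    rw [Complex.inv_im]
    have : 0 < Complex.normSq u := Complex.normSq_pos.2 hu0
    exact div_neg_of_neg_of_pos (by linarith) this


lemma deriv_alg (w r t₁ t₂ S C : ℂ) (hC : C ≠ 0) (h1C : (1:ℂ) + C ≠ 0)
    (hSw : S - w ≠ 0) (hT1 : S/(1+C) - t₁ ≠ 0) (hT2 : S/(1+C) - t₂ ≠ 0)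
    (hr0 : r ≠ 0) (hw0 : w ≠ 0) (hC2 : C^2 = 1 - S^2)
    (hsum : w*t₁ + w*t₂ = 2) (hprod : t₁*t₂ = 1) (hrdef : 2*r = w*(t₁ - t₂)) :
    (-S/C) - w * (1/C) + (1-w^2) * ((1/(C*(1+C))) * ((-1/r) * ((S/(1+C) - t₁)⁻¹ - (S/(1+C) - t₂)⁻¹)))
      = C/(S-w) := by
  have hA1 : S - t₁*(1+C) ≠ 0 := by
    intro h; apply hT1; field_simp; linear_combination h
  have hA2 : S - t₂*(1+C) ≠ 0 := by
    intro h; apply hT2; field_simp; linear_combination h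
  have hwS : w - S ≠ 0 := fun h => hSw (by linear_combination -h)
  have e1 : (S/(1+C) - t₁)⁻¹ = (1+C) / (S - t₁*(1+C)) := by
    rw [show S/(1+C) - t₁ = (S - t₁*(1+C))/(1+C) by field_simp, inv_div]
  have e2 : (S/(1+C) - t₂)⁻¹ = (1+C) / (S - t₂*(1+C)) := by
    rw [show S/(1+C) - t₂ = (S - t₂*(1+C))/(1+C) by field_simp, inv_div]
  rw [e1, e2]
  have ediff : (1+C)/(S - t₁*(1+C)) - (1+C)/(S - t₂*(1+C))
      = (1+C)^2*(t₁-t₂)/((S - t₁*(1+C))*(S - t₂*(1+C))) := by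
    rw [div_sub_div _ _ hA1 hA2]
    congr 1
    ring
  rw [ediff]
  have eA : (S - t₁*(1+C)) * (S - t₂*(1+C)) = 2*(1+C)*(w-S)/w := by
    field_simp
    linear_combination w*hC2 - S*(1+C)*hsum + w*(1+C)^2*hprod
  rw [eA]
  have h2wS : 2*(1+C)*(w-S) ≠ 0 := by
    exact mul_ne_zero (mul_ne_zero two_ne_zero h1C) hwS
  have hX : (1+C)^2*(t₁-t₂)/(2*(1+C)*(w-S)/w) = (1+C)*r/(w-S) := by
    rw [div_div_eq_mul_div, div_eq_div_iff h2wS hwS]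
    linear_combination -(1+C)^2*(w-S)*hrdef
  have e3 : (1-w^2) * ((1/(C*(1+C))) * ((-1/r) * ((1+C)^2*(t₁-t₂)/(2*(1+C)*(w-S)/w))))
      = (1-w^2)/(C*(S-w)) := by
    rw [hX]
    field_simp
    ring
  rw [e3]
  field_simp
  linear_combination -hC2


noncomputable def Tt (s : ℝ) : ℝ := s / (1 + Real.sqrt (1 - s ^ 2))

noncomputable def Phi (r t₁ t₂ : ℂ) (u : ℝ) : ℂ :=
  (-1/r) * (Complex.log ((u:ℂ) - t₁) - Complex.log ((u:ℂ) - t₂))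

noncomputable def Ff (w r t₁ t₂ : ℂ) (s : ℝ) : ℂ :=
  ((Real.sqrt (1 - s ^ 2) : ℝ) : ℂ) - w * ((Real.arcsin s : ℝ) : ℂ)
    + (1 - w ^ 2) * Phi r t₁ t₂ (Tt s)

variable {w r t₁ t₂ : ℂ}


lemma hasDerivAt_Phi (hr0 : r ≠ 0) (h1 : t₁.im < 0) (h2 : 0 < t₂.im) (u : ℝ) :
    HasDerivAt (Phi r t₁ t₂)
      ((-1/r) * (((u:ℂ) - t₁)⁻¹ - ((u:ℂ) - t₂)⁻¹)) u := by
  have l1 : HasDerivAt (fun z : ℂ => Complex.log (z - t₁)) (((u:ℂ) - t₁)⁻¹) (u:ℂ) := by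
    have hm : ((u:ℂ) - t₁) ∈ Complex.slitPlane := Or.inr (by
      simp only [Complex.sub_im, Complex.ofReal_im, zero_sub]
      intro h; rw [neg_eq_zero] at h; exact absurd h (ne_of_lt h1))
    exact ((Complex.hasDerivAt_log hm).comp (u:ℂ) ((hasDerivAt_id (u:ℂ)).sub_const t₁)).congr_deriv (mul_one _)
  have l2 : HasDerivAt (fun z : ℂ => Complex.log (z - t₂)) (((u:ℂ) - t₂)⁻¹) (u:ℂ) := by
    have hm : ((u:ℂ) - t₂) ∈ Complex.slitPlane := Or.inr (by
      simp only [Complex.sub_im, Complex.ofReal_im, zero_sub]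
      intro h; rw [neg_eq_zero] at h; exact absurd h (ne_of_gt h2))
    exact ((Complex.hasDerivAt_log hm).comp (u:ℂ) ((hasDerivAt_id (u:ℂ)).sub_const t₂)).congr_deriv (mul_one _)
  exact ((l1.comp_ofReal.sub l2.comp_ofReal).const_mul (-1/r))

lemma continuous_Phi (h1 : t₁.im < 0) (h2 : 0 < t₂.im) : Continuous (Phi r t₁ t₂) := by
  apply Continuous.mul continuous_const
  apply Continuous.sub
  · apply Continuous.clog (by continuity)
    intro u
    exact Or.inr (by
      simp only [Complex.sub_im, Complex.ofReal_im, zero_sub]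
      intro h; rw [neg_eq_zero] at h; exact absurd h (ne_of_lt h1))
  · apply Continuous.clog (by continuity)
    intro u
    exact Or.inr (by
      simp only [Complex.sub_im, Complex.ofReal_im, zero_sub]
      intro h; rw [neg_eq_zero] at h; exact absurd h (ne_of_gt h2))

lemma continuous_Tt : Continuous Tt := by
  apply Continuous.div continuous_id
  · continuity
  · intro s
    have := Real.sqrt_nonneg (1 - s ^ 2)
    positivity

lemma continuous_Ff (h1 : t₁.im < 0) (h2 : 0 < t₂.im) : Continuous (Ff w r t₁ t₂) := by
  unfold Ff
  apply Continuous.add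
  · apply Continuous.sub
    · exact Complex.continuous_ofReal.comp (by continuity)
    · exact continuous_const.mul (Complex.continuous_ofReal.comp Real.continuous_arcsin)
  · exact continuous_const.mul ((continuous_Phi h1 h2).comp continuous_Tt)


lemma hasDerivAt_Ff (hw : 0 < w.im) (hr0 : r ≠ 0) (h1 : t₁.im < 0) (h2 : 0 < t₂.im)
    (hw0 : w ≠ 0) (hsum : w*t₁ + w*t₂ = 2) (hprod : t₁*t₂ = 1) (hrdef : 2*r = w*(t₁ - t₂))
    {s : ℝ} (hs : s ∈ Ioo (-1:ℝ) 1) :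
    HasDerivAt (Ff w r t₁ t₂) (((Real.sqrt (1 - s ^ 2) : ℝ) : ℂ) / ((s:ℂ) - w)) s := by
  obtain ⟨hs1, hs2⟩ := hs
  have h1s : (0:ℝ) < 1 - s ^ 2 := by nlinarith
  set q := Real.sqrt (1 - s ^ 2) with hqdef
  have hq0 : 0 < q := Real.sqrt_pos.2 h1s
  have hq2 : q ^ 2 = 1 - s ^ 2 := Real.sq_sqrt h1s.le
  have h1q : (0:ℝ) < 1 + q := by linarith
  -- derivative of sqrt(1 - s^2)
  have hqd : HasDerivAt (fun x : ℝ => Real.sqrt (1 - x ^ 2)) (-s / q) s := by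
    have hinner : HasDerivAt (fun x : ℝ => 1 - x ^ 2) (-(2*s)) s := by
      simpa using (hasDerivAt_pow 2 s).const_sub 1
    have := (Real.hasDerivAt_sqrt (ne_of_gt h1s)).comp s hinner
    refine this.congr_deriv (Eq.symm ?_)
    rw [← hqdef]
    field_simp
  -- derivative of Tt
  have hTd : HasDerivAt Tt (1 / (q * (1 + q))) s := by
    have hden : HasDerivAt (fun x : ℝ => 1 + Real.sqrt (1 - x ^ 2)) (-s / q) s :=
      hqd.const_add 1
    have := (hasDerivAt_id s).div hden (by rw [← hqdef]; positivity)
    refine this.congr_deriv (Eq.symm ?_)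
    rw [← hqdef]
    simp only [id_eq]
    field_simp
    nlinarith [hq2]
  -- derivative of arcsin
  have harc : HasDerivAt Real.arcsin (1 / q) s := by
    have := Real.hasDerivAt_arcsin hs1.ne' hs2.ne
    rwa [← hqdef] at this
  -- assemble
  have hPhiT := (hasDerivAt_Phi hr0 h1 h2 (Tt s)).scomp s hTd
  have hsum' := ((hqd.ofReal_comp.sub ((harc.ofReal_comp).const_mul w)).add
    (hPhiT.const_mul (1 - w ^ 2)))
  have : Ff w r t₁ t₂ = fun x : ℝ =>
      ((Real.sqrt (1 - x ^ 2) : ℝ) : ℂ) - w * ((Real.arcsin x : ℝ) : ℂ)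
        + (1 - w ^ 2) * Phi r t₁ t₂ (Tt x) := rfl
  rw [this]
  refine hsum'.congr_deriv (Eq.symm ?_)
  -- now the value identity
  have hTs : Tt s = s / (1 + q) := by rw [Tt, hqdef]
  have hC : ((q:ℝ):ℂ) ≠ 0 := Complex.ofReal_ne_zero.2 (ne_of_gt hq0)
  have h1C : (1:ℂ) + (q:ℝ) ≠ 0 := by
    have : ((1 + q : ℝ) : ℂ) ≠ 0 := Complex.ofReal_ne_zero.2 (ne_of_gt h1q)
    push_cast at this
    exact this
  have hSw : (s:ℂ) - w ≠ 0 := by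
    intro h
    have := congrArg Complex.im h
    simp only [Complex.sub_im, Complex.ofReal_im, Complex.zero_im, zero_sub] at this
    exact absurd this (by intro hh; rw [neg_eq_zero] at hh; exact hw.ne' hh)
  have hT1 : ((s:ℂ))/(1+(q:ℂ)) - t₁ ≠ 0 := by
    intro h
    have him : (((s:ℂ))/(1+(q:ℂ))).im = 0 := by
      have : ((s:ℂ))/(1+(q:ℂ)) = ((s / (1+q) : ℝ) : ℂ) := by push_cast; ring
      rw [this]; exact Complex.ofReal_im _
    have := congrArg Complex.im h
    simp only [Complex.sub_im, Complex.zero_im, him, zero_sub] at this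
    rw [neg_eq_zero] at this
    exact absurd this h1.ne
  have hT2 : ((s:ℂ))/(1+(q:ℂ)) - t₂ ≠ 0 := by
    intro h
    have him : (((s:ℂ))/(1+(q:ℂ))).im = 0 := by
      have : ((s:ℂ))/(1+(q:ℂ)) = ((s / (1+q) : ℝ) : ℂ) := by push_cast; ring
      rw [this]; exact Complex.ofReal_im _
    have := congrArg Complex.im h
    simp only [Complex.sub_im, Complex.zero_im, him, zero_sub] at this
    rw [neg_eq_zero] at this
    exact absurd this h2.ne'
  have hC2 : ((q:ℝ):ℂ)^2 = 1 - ((s:ℝ):ℂ)^2 := by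
    have := congrArg (fun x : ℝ => (x:ℂ)) hq2
    push_cast at this
    push_cast
    exact this
  have halg := deriv_alg w r t₁ t₂ (s:ℂ) ((q:ℝ):ℂ) hC h1C hSw hT1 hT2 hr0 hw0 hC2 hsum hprod hrdef
  simp only [Function.comp] at *
  rw [hTs]
  rw [Complex.real_smul]
  push_cast
  linear_combination -halg


lemma key (w : ℂ) (hw : 0 < w.im) :
    ∃ r : ℂ, r ^ 2 = 1 - w ^ 2 ∧
      (∫ s in (-1:ℝ)..(1:ℝ), ((Real.sqrt (1 - s ^ 2) : ℝ):ℂ) / ((s:ℂ) - w))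
        = (Real.pi : ℂ) * (Complex.I * r - w) := by
  have hw0 : w ≠ 0 := fun h => by simp [h] at hw
  obtain ⟨t₁, ht₁root, h1⟩ := exists_t1 w hw
  have ht₁0 : t₁ ≠ 0 := fun h => by simp [h] at h1
  set t₂ := t₁⁻¹ with ht₂def
  have h2 : 0 < t₂.im := by
    rw [ht₂def, Complex.inv_im]
    have hn : 0 < Complex.normSq t₁ := Complex.normSq_pos.2 ht₁0
    have : 0 < -t₁.im := by linarith
    positivity
  have hprod : t₁ * t₂ = 1 := mul_inv_cancel₀ ht₁0
  have hsum : w * t₁ + w * t₂ = 2 := by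
    rw [ht₂def]
    field_simp
    linear_combination ht₁root
  set r := w * (t₁ - t₂) / 2 with hrdef'
  have hrdef : 2 * r = w * (t₁ - t₂) := by rw [hrdef']; ring
  have hr2 : r ^ 2 = 1 - w ^ 2 := by
    rw [hrdef']
    linear_combination ((w*t₁+w*t₂+2)/4) * hsum - w^2 * hprod
  have hr0 : r ≠ 0 := by
    intro h
    have h' : w * (t₁ - t₂) = 0 := by rw [← hrdef, h, mul_zero]
    rcases mul_eq_zero.1 h' with h'' | h''
    · exact hw0 h''
    · have := congrArg Complex.im h''
      simp only [Complex.sub_im, Complex.zero_im] at this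
      linarith
  clear_value t₂ r
  refine ⟨r, hr2, ?_⟩
  have hden : ∀ s : ℝ, (s:ℂ) - w ≠ 0 := by
    intro s h
    have := congrArg Complex.im h
    simp only [Complex.sub_im, Complex.ofReal_im, Complex.zero_im, zero_sub] at this
    rw [neg_eq_zero] at this
    exact hw.ne' this
  have hint : IntervalIntegrable
      (fun s : ℝ => ((Real.sqrt (1 - s^2) : ℝ):ℂ) / ((s:ℂ) - w)) volume (-1) 1 := by
    apply Continuous.intervalIntegrable
    exact Continuous.div (by continuity) (by continuity) hden
  have hFTC : (∫ s in (-1:ℝ)..1, ((Real.sqrt (1 - s^2) : ℝ):ℂ) / ((s:ℂ) - w))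
      = Ff w r t₁ t₂ 1 - Ff w r t₁ t₂ (-1) := by
    apply intervalIntegral.integral_eq_sub_of_hasDeriv_right_of_le (by norm_num)
    · exact (continuous_Ff h1 h2).continuousOn
    · intro x hx
      exact (hasDerivAt_Ff hw hr0 h1 h2 hw0 hsum hprod hrdef hx).hasDerivWithinAt
    · exact hint
  rw [hFTC]
  have hT1v : Tt 1 = 1 := by norm_num [Tt]
  have hT1m : Tt (-1) = -1 := by norm_num [Tt]
  have hF1 : Ff w r t₁ t₂ 1 = - (w * ((Real.pi/2 : ℝ):ℂ)) + (1 - w^2) * Phi r t₁ t₂ 1 := by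
    rw [Ff, hT1v]
    norm_num [Real.arcsin_one]
  have hFm1 : Ff w r t₁ t₂ (-1) = (w * ((Real.pi/2 : ℝ):ℂ)) + (1 - w^2) * Phi r t₁ t₂ (-1) := by
    rw [Ff, hT1m]
    norm_num [Real.arcsin_neg_one]
  rw [hF1, hFm1]
  -- log computation
  have him1 : 0 < ((1:ℂ) - t₁).im := by simp [Complex.sub_im]; linarith
  have himm1 : 0 < ((-1:ℂ) - t₁).im := by simp [Complex.sub_im]; linarith
  have him2 : ((1:ℂ) - t₂).im < 0 := by simp [Complex.sub_im]; linarith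
  have himm2 : ((-1:ℂ) - t₂).im < 0 := by simp [Complex.sub_im]; linarith
  have e1 := log_mul_of_im_pos_of_im_neg him1 himm2
  have e2 := log_mul_of_im_pos_of_im_neg himm1 him2
  have p1 : ((1:ℂ) - t₁) * ((-1:ℂ) - t₂) = t₁ - t₂ := by linear_combination hprod
  have p2 : ((-1:ℂ) - t₁) * ((1:ℂ) - t₂) = t₂ - t₁ := by linear_combination hprod
  have him21 : 0 < (t₂ - t₁).im := by simp only [Complex.sub_im]; linarith
  have e3 : Complex.log (t₁ - t₂) = Complex.log (t₂ - t₁) - Real.pi * Complex.I := by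
    rw [show t₁ - t₂ = -(t₂ - t₁) by ring, log_neg_of_im_pos him21]
  rw [p1, e3] at e1
  rw [p2] at e2
  have hE : Complex.log ((1:ℂ) - t₁) - Complex.log ((1:ℂ) - t₂)
      - Complex.log ((-1:ℂ) - t₁) + Complex.log ((-1:ℂ) - t₂) = -(Real.pi * Complex.I) := by
    linear_combination e2 - e1
  have hPhi : Phi r t₁ t₂ 1 - Phi r t₁ t₂ (-1) = (Real.pi * Complex.I) / r := by
    rw [Phi, Phi]
    push_cast
    field_simp
    linear_combination -hE
  -- final assembly
  have : - (w * ((Real.pi/2 : ℝ):ℂ)) + (1 - w^2) * Phi r t₁ t₂ 1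
      - ((w * ((Real.pi/2 : ℝ):ℂ)) + (1 - w^2) * Phi r t₁ t₂ (-1))
      = - w * Real.pi + (1 - w^2) * (Phi r t₁ t₂ 1 - Phi r t₁ t₂ (-1)) := by
    push_cast
    ring
  rw [this, hPhi]
  field_simp
  linear_combination -Complex.I * hr2

end Stmt8Aux

open Stmt8Aux MeasureTheory intervalIntegral

/-- The Stieltjes transform
`K = (1/(2πb²)) ∫_{a−2b}^{a+2b} √(4b² − (a−x)²)/(x − λ) dx` of the semicircle-type
density satisfies `Im K > 0` and `K (a − λ − b² K) = 1`; that is, it is the unique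
root with positive imaginary part of `b² K² − (a − λ) K + 1 = 0`. -/
theorem stmt8 (a : ℝ) (b : ℝ) (hb : 0 < b) (lam : ℂ) (hlam : 0 < lam.im)
    (K : ℂ)
    (hK : K = ((1 / (2 * Real.pi * b ^ 2) : ℝ) : ℂ) *
      ∫ x in (a - 2 * b)..(a + 2 * b),
        ((Real.sqrt (4 * b ^ 2 - (a - x) ^ 2) : ℝ) : ℂ) / ((x : ℂ) - lam)) :
    0 < K.im ∧
    K * ((a : ℂ) - lam - (b : ℂ) ^ 2 * K) = 1 ∧
    (b : ℂ) ^ 2 * K ^ 2 - ((a : ℂ) - lam) * K + 1 = 0 ∧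
    ∀ K' : ℂ, 0 < K'.im → (b : ℂ) ^ 2 * K' ^ 2 - ((a : ℂ) - lam) * K' + 1 = 0 → K' = K := by
  have hb2 : (0:ℝ) < 2 * b := by linarith
  have hπ : (0:ℝ) < Real.pi := Real.pi_pos
  set f : ℝ → ℂ := fun x => ((Real.sqrt (4 * b ^ 2 - (a - x) ^ 2) : ℝ) : ℂ) / ((x : ℂ) - lam)
    with hfdef
  set w : ℂ := (lam - (a:ℂ)) / (((2*b : ℝ)):ℂ) with hwdef
  have hwim : w.im = lam.im / (2*b) := by
    rw [hwdef, Complex.div_ofReal_im]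
    simp [Complex.sub_im]
  have hw : 0 < w.im := by rw [hwim]; positivity
  obtain ⟨r, hr2, hI⟩ := key w hw
  have hdenx : ∀ x : ℝ, (x:ℂ) - lam ≠ 0 := by
    intro x h
    have := congrArg Complex.im h
    simp only [Complex.sub_im, Complex.ofReal_im, Complex.zero_im, zero_sub, neg_eq_zero] at this
    exact hlam.ne' this
  -- pointwise identity
  have hfun : ∀ s : ℝ, f (2*b*s + a) = ((Real.sqrt (1 - s^2) : ℝ):ℂ) / ((s:ℂ) - w) := by
    intro s
    simp only [hfdef]
    have h1 : 4 * b ^ 2 - (a - (2*b*s + a)) ^ 2 = (2*b)^2 * (1 - s^2) := by ring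
    have h2 : Real.sqrt ((2*b)^2 * (1 - s^2)) = (2*b) * Real.sqrt (1 - s^2) := by
      rw [Real.sqrt_mul (by positivity), Real.sqrt_sq hb2.le]
    have hbc : (b:ℂ) ≠ 0 := Complex.ofReal_ne_zero.2 (ne_of_gt hb)
    have h3 : (((2*b*s + a : ℝ)):ℂ) - lam = ((2*b:ℝ):ℂ) * ((s:ℂ) - w) := by
      rw [hwdef]
      push_cast
      field_simp
      ring
    rw [h1, h2, h3,
      show ((2*b*Real.sqrt (1-s^2) : ℝ):ℂ) = ((2*b:ℝ):ℂ) * ((Real.sqrt (1-s^2):ℝ):ℂ) from by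
        push_cast; ring,
      mul_div_mul_left _ _ (Complex.ofReal_ne_zero.2 (ne_of_gt hb2))]
  -- substitution
  have hsub := intervalIntegral.integral_comp_mul_add (a := -1) (b := 1) (c := 2*b)
      f (ne_of_gt hb2) a
  rw [show (2*b*(-1)+a : ℝ) = a - 2*b by ring, show (2*b*1+a : ℝ) = a + 2*b by ring] at hsub
  simp only [hfun] at hsub
  have horig : (∫ x in (a - 2*b)..(a + 2*b), f x)
      = (2*b) • ∫ s in (-1:ℝ)..(1:ℝ), ((Real.sqrt (1 - s^2) : ℝ):ℂ) / ((s:ℂ) - w) := by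
    rw [hsub, smul_smul, mul_inv_cancel₀ (ne_of_gt hb2), one_smul]
  have hKval : K = (Complex.I * r - w) / (b:ℂ) := by
    rw [hK, horig, hI, Complex.real_smul]
    have hbne : (b:ℂ) ≠ 0 := Complex.ofReal_ne_zero.2 (ne_of_gt hb)
    have hπne : ((Real.pi:ℝ):ℂ) ≠ 0 := Complex.ofReal_ne_zero.2 (ne_of_gt hπ)
    push_cast
    field_simp
  -- positivity of Im K
  have hcont : Continuous f := by
    simp only [hfdef]
    exact Continuous.div (by fun_prop) (by fun_prop) hdenx
  have hfint : IntervalIntegrable f volume (a - 2*b) (a + 2*b) := hcont.intervalIntegrable _ _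
  have him_int : (∫ x in (a - 2*b)..(a + 2*b), f x).im
      = ∫ x in (a - 2*b)..(a + 2*b), (f x).im := by
    simpa using (ContinuousLinearMap.intervalIntegral_comp_comm Complex.imCLM hfint).symm
  have hposim : 0 < ∫ x in (a - 2*b)..(a + 2*b), (f x).im := by
    apply intervalIntegral_pos_of_pos_on
    · exact (Complex.continuous_im.comp hcont).intervalIntegrable _ _
    · intro x hx
      have hx1 : a - 2*b < x := hx.1
      have hx2 : x < a + 2*b := hx.2
      have hlt : 0 < 4 * b ^ 2 - (a - x) ^ 2 := by nlinarith
      have hsq : 0 < Real.sqrt (4 * b ^ 2 - (a - x) ^ 2) := Real.sqrt_pos.2 hlt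
      have hns : 0 < Complex.normSq ((x:ℂ) - lam) := Complex.normSq_pos.2 (hdenx x)
      have heq : (f x).im = Real.sqrt (4*b^2-(a-x)^2) * lam.im / Complex.normSq ((x:ℂ) - lam) := by
        simp only [hfdef]
        rw [Complex.div_im]
        simp only [Complex.ofReal_re, Complex.ofReal_im, Complex.sub_im, Complex.sub_re,
          zero_mul, zero_div, zero_sub]
        ring
      rw [heq]
      positivity
    · linarith
  have hKim : 0 < K.im := by
    have him_mul : ∀ (c : ℝ) (Z : ℂ), ((c:ℂ) * Z).im = c * Z.im := by
      intro c Z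
      simp [Complex.mul_im]
    rw [hK, him_mul, him_int]
    have hc0 : (0:ℝ) < 1 / (2 * Real.pi * b ^ 2) := by positivity
    exact mul_pos hc0 hposim
  -- quadratic
  have hbne : (b:ℂ) ≠ 0 := Complex.ofReal_ne_zero.2 (ne_of_gt hb)
  have hbK : (b:ℂ) * K = Complex.I * r - w := by
    rw [hKval]; field_simp
  have ha : (a:ℂ) - lam = -(((2*b:ℝ):ℂ) * w) := by
    rw [hwdef]
    have : ((2*b:ℝ):ℂ) ≠ 0 := Complex.ofReal_ne_zero.2 (ne_of_gt hb2)
    field_simp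
    ring
  have hquad : (b : ℂ) ^ 2 * K ^ 2 - ((a : ℂ) - lam) * K + 1 = 0 := by
    push_cast at ha ⊢
    linear_combination ((b:ℂ)*K + Complex.I*r + w) * hbK - hr2 - K * ha + r^2 * Complex.I_sq
  refine ⟨hKim, by linear_combination -hquad, hquad, ?_⟩
  intro K' hK'im hK'quad
  by_contra hne
  have hfac : (K' - K) * ((b:ℂ)^2*(K' + K) - ((a:ℂ) - lam)) = 0 := by
    linear_combination hK'quad - hquad
  rcases mul_eq_zero.1 hfac with h | h
  · exact hne (sub_eq_zero.1 h)
  · have hsum2 : (b:ℂ)^2*(K' + K) = (a:ℂ) - lam := by linear_combination h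
    have hKK' : (b:ℂ)^2 * K * K' = 1 := by
      linear_combination -hK'quad + K' * hsum2
    have hK0 : K ≠ 0 := by
      intro h0; rw [h0] at hKim; simp at hKim
    have hK'eq : K' = ((b:ℂ)^2 * K)⁻¹ := by
      field_simp
      linear_combination hKK'
    have hzim : ((b:ℂ)^2 * K).im = b^2 * K.im := by
      simp [pow_two, Complex.mul_re, Complex.mul_im]
    have : K'.im < 0 := by
      rw [hK'eq, Complex.inv_im, hzim]
      have hns : 0 < Complex.normSq ((b:ℂ)^2 * K) := by
        apply Complex.normSq_pos.2
        exact mul_ne_zero (pow_ne_zero _ hbne) hK0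
      have : 0 < b^2 * K.im := by positivity
      exact div_neg_of_neg_of_pos (by linarith) hns
    linarith
end

section
/- Let a ∈ ℝ, b > 0, and let K : ℂ → ℂ be any function such that for every λ with Im λ > 0, Im K(λ) > 0 and K(λ) · (a − λ − b² K(λ)) = 1. Then for every real x with |a − x| < 2b, the limit lim_{ε→0+} K(x + iε) exists and equals (a − x)/(2b²) + i·√(4b² − (a−x)²)/(2b²). -/
open Filter

/-- If `K : ℂ → ℂ` satisfies `Im K(λ) > 0` and `K(λ)(a − λ − b² K(λ)) = 1`
for every `λ` in the upper half plane, then for every real `x` with `|a − x| < 2b` the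
boundary value `lim_{ε→0+} K(x + iε)` exists and equals
`(a−x)/(2b²) + i √(4b² − (a−x)²)/(2b²)`. -/
theorem stmt9 (a : ℝ) (b : ℝ) (hb : 0 < b) (K : ℂ → ℂ)
    (hK : ∀ lam : ℂ, 0 < lam.im →
      0 < (K lam).im ∧ K lam * ((a : ℂ) - lam - (b : ℂ) ^ 2 * K lam) = 1) :
    ∀ x : ℝ, |a - x| < 2 * b →
      Tendsto (fun ε : ℝ => K ((x : ℂ) + (ε : ℂ) * Complex.I))
        (nhdsWithin 0 (Set.Ioi 0))
        (nhds (((a - x) / (2 * b ^ 2) : ℝ) +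
          Complex.I * ((Real.sqrt (4 * b ^ 2 - (a - x) ^ 2) / (2 * b ^ 2) : ℝ) : ℂ))) := by
  intro x hx
  have hb2 : (0:ℝ) < b ^ 2 := by positivity
  set c : ℝ := a - x with hc
  have habs := abs_lt.mp hx
  have hcs : c ^ 2 < 4 * b ^ 2 := by nlinarith [habs.1, habs.2]
  set s : ℝ := Real.sqrt (4 * b ^ 2 - c ^ 2) with hsdef
  have hs : 0 < s := Real.sqrt_pos.mpr (by linarith)
  have hs2 : s ^ 2 = 4 * b ^ 2 - c ^ 2 := Real.sq_sqrt (by linarith)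
  set u : ℝ → ℂ := fun ε => 2 * (b:ℂ) ^ 2 * K ((x:ℂ) + (ε:ℂ) * Complex.I)
      - ((a:ℂ) - ((x:ℂ) + (ε:ℂ) * Complex.I)) with hu
  have key : ∀ ε ∈ Set.Ioi (0:ℝ),
      ‖u ε - Complex.I * (s:ℂ)‖ ≤ (2 * |c| * ε + ε ^ 2) / s := by
    intro ε hε
    have hε0 : (0:ℝ) < ε := hε
    obtain ⟨h1, h2⟩ := hK ((x:ℂ) + (ε:ℂ) * Complex.I) (by simp [hε0])
    have hsc : ((s:ℂ)) ^ 2 = 4 * (b:ℂ) ^ 2 - (c:ℂ) ^ 2 := by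
      exact_mod_cast congrArg (fun t : ℝ => (t:ℂ)) hs2
    have hcc : (c:ℂ) = (a:ℂ) - (x:ℂ) := by push_cast [hc]; ring
    have hu2 : u ε ^ 2 + (s:ℂ) ^ 2 = -2 * (c:ℂ) * (ε:ℂ) * Complex.I - (ε:ℂ) ^ 2 := by
      rw [hsc, hcc, hu]
      linear_combination (-4 * (b:ℂ) ^ 2) * h2 + (ε:ℂ) ^ 2 * Complex.I_sq
    have hnorm : ‖u ε ^ 2 + (s:ℂ) ^ 2‖ ≤ 2 * |c| * ε + ε ^ 2 := by
      rw [hu2]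
      calc ‖-2 * (c:ℂ) * (ε:ℂ) * Complex.I - (ε:ℂ) ^ 2‖
          ≤ ‖-2 * (c:ℂ) * (ε:ℂ) * Complex.I‖ + ‖(ε:ℂ) ^ 2‖ := norm_sub_le _ _
        _ = 2 * |c| * ε + ε ^ 2 := by
            simp [norm_mul, Complex.norm_real, abs_of_pos hε0, norm_pow, sq_abs]
    have hfac : (u ε - Complex.I * s) * (u ε + Complex.I * s) = u ε ^ 2 + (s:ℂ) ^ 2 := by
      linear_combination (-(s:ℂ) ^ 2) * Complex.I_sq
    have him : s ≤ (u ε + Complex.I * s).im := by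
      have h1' : (u ε).im = 2 * b ^ 2 * (K ((x:ℂ) + (ε:ℂ) * Complex.I)).im + ε := by
        simp [hu, ← Complex.ofReal_pow, Complex.add_im, Complex.mul_im, Complex.sub_im]
      have h2' : (u ε + Complex.I * s).im = (u ε).im + s := by
        simp [Complex.add_im, Complex.mul_im]
      rw [h2', h1']
      nlinarith
    have hnlow : s ≤ ‖u ε + Complex.I * s‖ := by
      calc s ≤ (u ε + Complex.I * s).im := him
        _ ≤ |(u ε + Complex.I * s).im| := le_abs_self _
        _ ≤ ‖u ε + Complex.I * s‖ := Complex.abs_im_le_norm _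
    have hprod : ‖u ε - Complex.I * s‖ * ‖u ε + Complex.I * s‖ ≤ 2 * |c| * ε + ε ^ 2 := by
      rw [← norm_mul, hfac]; exact hnorm
    rw [le_div_iff₀ hs]
    calc ‖u ε - Complex.I * s‖ * s ≤ ‖u ε - Complex.I * s‖ * ‖u ε + Complex.I * s‖ := by
          exact mul_le_mul_of_nonneg_left hnlow (norm_nonneg _)
      _ ≤ 2 * |c| * ε + ε ^ 2 := hprod
  -- limit of u
  have hulim : Tendsto u (nhdsWithin 0 (Set.Ioi 0)) (nhds (Complex.I * s)) := by
    rw [tendsto_iff_norm_sub_tendsto_zero]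
    have hbound : Tendsto (fun ε : ℝ => (2 * |c| * ε + ε ^ 2) / s)
        (nhdsWithin 0 (Set.Ioi 0)) (nhds 0) := by
      have hcont : Continuous (fun ε : ℝ => (2 * |c| * ε + ε ^ 2) / s) := by
        continuity
      have := (hcont.tendsto 0).mono_left (nhdsWithin_le_nhds (s := Set.Ioi (0:ℝ)))
      simpa using this
    refine squeeze_zero' ?_ ?_ hbound
    · exact Eventually.of_forall fun ε => norm_nonneg _
    · filter_upwards [self_mem_nhdsWithin] with ε hε
      exact key ε hε
  -- express K in terms of u and conclude
  have hKeq : ∀ ε : ℝ, K ((x:ℂ) + (ε:ℂ) * Complex.I)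
      = (u ε + ((a:ℂ) - ((x:ℂ) + (ε:ℂ) * Complex.I))) / (2 * (b:ℂ) ^ 2) := by
    intro ε
    have hbne : (2 * (b:ℂ) ^ 2) ≠ 0 :=
      mul_ne_zero two_ne_zero (pow_ne_zero _ (Complex.ofReal_ne_zero.mpr hb.ne'))
    field_simp [hu]
    rw [eq_div_iff (pow_ne_zero _ (Complex.ofReal_ne_zero.mpr hb.ne'))]
    simp only [hu]
    ring
  have hlam : Tendsto (fun ε : ℝ => (a:ℂ) - ((x:ℂ) + (ε:ℂ) * Complex.I))
      (nhdsWithin 0 (Set.Ioi 0)) (nhds ((c:ℂ))) := by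
    have hcont : Continuous (fun ε : ℝ => (a:ℂ) - ((x:ℂ) + (ε:ℂ) * Complex.I)) :=
      continuous_const.sub (continuous_const.add (Complex.continuous_ofReal.mul continuous_const))
    have := (hcont.tendsto 0).mono_left (nhdsWithin_le_nhds (s := Set.Ioi (0:ℝ)))
    have hcc : (c:ℂ) = (a:ℂ) - (x:ℂ) := by push_cast [hc]; ring
    rw [hcc]
    simpa using this
  have hfinal : Tendsto (fun ε : ℝ => (u ε + ((a:ℂ) - ((x:ℂ) + (ε:ℂ) * Complex.I))) / (2 * (b:ℂ) ^ 2))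
      (nhdsWithin 0 (Set.Ioi 0)) (nhds ((Complex.I * s + c) / (2 * (b:ℂ) ^ 2))) := by
    exact (hulim.add hlam).div_const _
  have heq : (Complex.I * (s:ℂ) + (c:ℂ)) / (2 * (b:ℂ) ^ 2)
      = ((c / (2 * b ^ 2) : ℝ) : ℂ) + Complex.I * ((s / (2 * b ^ 2) : ℝ) : ℂ) := by
    have hbne : (2 * (b:ℂ) ^ 2) ≠ 0 :=
      mul_ne_zero two_ne_zero (pow_ne_zero _ (Complex.ofReal_ne_zero.mpr hb.ne'))
    field_simp
    push_cast
    ring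
  simp only [hKeq]
  rw [show (((a - x) / (2 * b ^ 2) : ℝ) : ℂ) +
      Complex.I * ((Real.sqrt (4 * b ^ 2 - (a - x) ^ 2) / (2 * b ^ 2) : ℝ) : ℂ)
      = (Complex.I * (s:ℂ) + (c:ℂ)) / (2 * (b:ℂ) ^ 2) from by rw [heq]]
  exact hfinal
end

section
/- Let (a_n)_{n≥0} be a real sequence, (b_n)_{n≥0} a positive real sequence, and let P_n, Q_n be the first- and second-type polynomials of the associated Jacobi matrix. Fix n ≥ 1, a real number x, and real numbers D and B, and set K = D + iB. If P_n(x) + P_{n-1}(x) b_{n-1} K ≠ 0, then Im( −(Q_n(x) + Q_{n-1}(x) b_{n-1} K)/(P_n(x) + P_{n-1}(x) b_{n-1} K) ) = B / ( (P_n(x) + b_{n-1} P_{n-1}(x) D)² + (b_{n-1} P_{n-1}(x) B)² ). -/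
/-- With `K = D + iB`, the imaginary part of
`−(Q_n(x) + Q_{n-1}(x) b_{n-1} K)/(P_n(x) + P_{n-1}(x) b_{n-1} K)` equals
`B / ((P_n(x) + b_{n-1} P_{n-1}(x) D)² + (b_{n-1} P_{n-1}(x) B)²)`. -/
theorem stmt11 (a : ℕ → ℝ) (b : ℕ → ℝ) (hb : ∀ n, 0 < b n)
    (P Q : ℕ → ℝ → ℝ)
    (hP0 : ∀ x : ℝ, P 0 x = 1)
    (hP1 : ∀ x : ℝ, P 1 x = (x - a 0) / b 0)
    (hQ0 : ∀ x : ℝ, Q 0 x = 0)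
    (hQ1 : ∀ x : ℝ, Q 1 x = 1 / b 0)
    (hPrec : ∀ (n : ℕ) (x : ℝ),
      b n * P n x + a (n + 1) * P (n + 1) x + b (n + 1) * P (n + 2) x = x * P (n + 1) x)
    (hQrec : ∀ (n : ℕ) (x : ℝ),
      b n * Q n x + a (n + 1) * Q (n + 1) x + b (n + 1) * Q (n + 2) x = x * Q (n + 1) x)
    (n : ℕ) (hn : 1 ≤ n) (x D B : ℝ) (K : ℂ) (hKdef : K = (D : ℂ) + (B : ℂ) * Complex.I)
    (hden : ((P n x : ℂ) + (P (n - 1) x : ℂ) * (b (n - 1) : ℂ) * K) ≠ 0) :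
    (-(((Q n x : ℂ) + (Q (n - 1) x : ℂ) * (b (n - 1) : ℂ) * K) /
        ((P n x : ℂ) + (P (n - 1) x : ℂ) * (b (n - 1) : ℂ) * K))).im
      = B / ((P n x + b (n - 1) * P (n - 1) x * D) ^ 2
              + (b (n - 1) * P (n - 1) x * B) ^ 2) := by
  -- Wronskian: b m * (P (m+1) Q m − P m Q (m+1)) = −1 for all m
  have hW : ∀ m : ℕ, b m * (P (m+1) x * Q m x - P m x * Q (m+1) x) = -1 := by
    intro m
    induction m with
    | zero =>
      rw [hQ0, hQ1, hP0]
      field_simp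
      rw [mul_zero, zero_sub, mul_neg, mul_one_div_cancel (hb 0).ne']
    | succ k ih =>
      have h1 := hPrec k x
      have h2 := hQrec k x
      have key : b k * (P k x * Q (k+1) x - Q k x * P (k+1) x)
          + b (k+1) * (P (k+2) x * Q (k+1) x - Q (k+2) x * P (k+1) x) = 0 := by
        linear_combination Q (k+1) x * h1 - P (k+1) x * h2
      linear_combination key + ih
  obtain ⟨m, rfl⟩ : ∃ m, n = m + 1 := ⟨n - 1, (Nat.succ_pred_eq_of_pos hn).symm⟩
  simp only [Nat.add_sub_cancel] at hden ⊢
  set pn := P (m+1) x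
  set pm := P m x
  set qn := Q (m+1) x
  set qm := Q m x
  set β := b m
  have hW' : β * (pn * qm - pm * qn) = -1 := hW m
  have hns : Complex.normSq ((pn : ℂ) + (pm : ℂ) * (β : ℂ) * K) ≠ 0 := by
    simpa [Complex.normSq_eq_zero] using hden
  have hre : ((pn : ℂ) + (pm : ℂ) * (β : ℂ) * K).re = pn + pm * β * D := by
    simp [hKdef]
  have him : ((pn : ℂ) + (pm : ℂ) * (β : ℂ) * K).im = pm * β * B := by
    simp [hKdef]
  have hns' : Complex.normSq ((pn : ℂ) + (pm : ℂ) * (β : ℂ) * K)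
      = (pn + β * pm * D) ^ 2 + (β * pm * B) ^ 2 := by
    rw [Complex.normSq_apply, hre, him]; ring
  rw [Complex.neg_im, Complex.div_im, hre, him, hns']
  have hnrE : ((qn : ℂ) + (qm : ℂ) * (β : ℂ) * K).re = qn + qm * β * D := by
    simp [hKdef]
  have hniE : ((qn : ℂ) + (qm : ℂ) * (β : ℂ) * K).im = qm * β * B := by
    simp [hKdef]
  rw [hnrE, hniE]
  have hnum : (qn + qm * β * D) * (pm * β * B) - qm * β * B * (pn + pm * β * D) = B := by
    linear_combination (-B) * hW'
  rw [← sub_div, ← neg_div, neg_sub, hnum]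
end

section
/- Let (a_n)_{n≥0} be a real sequence and (b_n)_{n≥0} a positive real sequence satisfying b_k ≥ b_{k−1} and |a_k − a_{k−1}| ≤ 2(b_k − b_{k−1}) for all k ≥ 1, and let P_n be the first-type polynomials of the associated Jacobi matrix. Then for every n ≥ 1 and every real x with |x − a_n| ≥ 2 b_n, one has |P_n(x)| − |P_{n−1}(x)| ≥ 1. -/
/-- If `b_k ≥ b_{k-1}` and `|a_k − a_{k-1}| ≤ 2(b_k − b_{k-1})` for all
`k ≥ 1`, then for every `n ≥ 1` and every real `x` with `|x − a_n| ≥ 2 b_n` one has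
`|P_n(x)| − |P_{n-1}(x)| ≥ 1`. -/
theorem stmt12 (a : ℕ → ℝ) (b : ℕ → ℝ) (hb : ∀ n, 0 < b n)
    (hmono : ∀ k : ℕ, 1 ≤ k → b (k - 1) ≤ b k)
    (ha : ∀ k : ℕ, 1 ≤ k → |a k - a (k - 1)| ≤ 2 * (b k - b (k - 1)))
    (P : ℕ → ℝ → ℝ)
    (hP0 : ∀ x : ℝ, P 0 x = 1)
    (hP1 : ∀ x : ℝ, P 1 x = (x - a 0) / b 0)
    (hPrec : ∀ (n : ℕ) (x : ℝ),
      b n * P n x + a (n + 1) * P (n + 1) x + b (n + 1) * P (n + 2) x = x * P (n + 1) x)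
    (n : ℕ) (hn : 1 ≤ n) (x : ℝ) (hx : 2 * b n ≤ |x - a n|) :
    1 ≤ |P n x| - |P (n - 1) x| := by
  have prop : ∀ k : ℕ, 2 * b (k + 1) ≤ |x - a (k + 1)| → 2 * b k ≤ |x - a k| := by
    intro k h
    have h1 : |a (k + 1) - a k| ≤ 2 * (b (k + 1) - b k) := by
      simpa using ha (k + 1) (by omega)
    have h2 : |x - a (k + 1)| - |x - a k| ≤ |(x - a (k + 1)) - (x - a k)| :=
      abs_sub_abs_le_abs_sub _ _
    have h3 : |(x - a (k + 1)) - (x - a k)| = |a (k + 1) - a k| := by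
      rw [show (x - a (k + 1)) - (x - a k) = -(a (k + 1) - a k) by ring, abs_neg]
    linarith
  induction n, hn using Nat.le_induction with
  | base =>
    have h0 : 2 * b 0 ≤ |x - a 0| := prop 0 hx
    have hb0 := hb 0
    rw [hP1, hP0, abs_div, abs_of_pos hb0]
    rw [le_sub_iff_add_le, le_div_iff₀ hb0]
    simp only [abs_one]
    linarith
  | succ n hn1 IH =>
    have hxn : 2 * b n ≤ |x - a n| := prop n hx
    obtain ⟨m, rfl⟩ : ∃ m, n = m + 1 := ⟨n - 1, by omega⟩
    have IH' : 1 ≤ |P (m + 1) x| - |P m x| := by simpa using IH hxn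
    have hrec := hPrec m x
    have key : b (m + 1) * P (m + 2) x = (x - a (m + 1)) * P (m + 1) x - b m * P m x := by
      linarith [hrec]
    have h1 : |b (m + 1) * P (m + 2) x| = b (m + 1) * |P (m + 2) x| := by
      rw [abs_mul, abs_of_pos (hb (m + 1))]
    have h2 : |(x - a (m + 1)) * P (m + 1) x| = |x - a (m + 1)| * |P (m + 1) x| := abs_mul _ _
    have h3 : |b m * P m x| = b m * |P m x| := by rw [abs_mul, abs_of_pos (hb m)]
    have h4 : |(x - a (m + 1)) * P (m + 1) x| - |b m * P m x| ≤
        |(x - a (m + 1)) * P (m + 1) x - b m * P m x| := abs_sub_abs_le_abs_sub _ _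
    have h5 : b m ≤ b (m + 1) := by simpa using hmono (m + 1) (by omega)
    have h6 : (0:ℝ) ≤ |P m x| := abs_nonneg _
    have h7 : (0:ℝ) ≤ |P (m + 1) x| := abs_nonneg _
    have hbm1 := hb (m + 1)
    rw [key] at h1
    simp only [show m + 1 + 1 - 1 = m + 1 by omega]
    nlinarith [mul_le_mul_of_nonneg_right hxn h7,
      mul_le_mul_of_nonneg_right h5 h6, mul_le_mul_of_nonneg_left IH' (le_of_lt hbm1)]
end

section
/- Let (a_n)_{n≥0} be a real sequence, (b_n)_{n≥0} a positive real sequence, and let P_n be the first-type polynomials of the associated Jacobi matrix. Then for every n ≥ 1 and every real x with |x − a_n| < 2 b_n, one has b_n P_n(x)² − b_{n−1} P_{n−1}(x) P_{n+1}(x) > 0. -/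
/-- Inside the interval `|x − a_n| < 2 b_n` the Turán-type determinant
`b_n P_n(x)² − b_{n-1} P_{n-1}(x) P_{n+1}(x)` is strictly positive. -/
theorem stmt14 (a : ℕ → ℝ) (b : ℕ → ℝ) (hb : ∀ n, 0 < b n)
    (P : ℕ → ℝ → ℝ)
    (hP0 : ∀ x : ℝ, P 0 x = 1)
    (hP1 : ∀ x : ℝ, P 1 x = (x - a 0) / b 0)
    (hPrec : ∀ (n : ℕ) (x : ℝ),
      b n * P n x + a (n + 1) * P (n + 1) x + b (n + 1) * P (n + 2) x = x * P (n + 1) x)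
    (n : ℕ) (hn : 1 ≤ n) (x : ℝ) (hx : |x - a n| < 2 * b n) :
    0 < b n * P n x ^ 2 - b (n - 1) * P (n - 1) x * P (n + 1) x := by
  obtain ⟨m, rfl⟩ : ∃ m, n = m + 1 := ⟨n - 1, (Nat.succ_pred_eq_of_pos hn).symm⟩
  simp only [Nat.add_sub_cancel]
  have hnz : ∀ k, P k x ≠ 0 ∨ P (k + 1) x ≠ 0 := by
    intro k
    induction k with
    | zero => left; simp [hP0]
    | succ k ih =>
      by_contra h
      push_neg at h
      obtain ⟨h1, h2⟩ := h
      have hrec := hPrec k x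
      rw [h1, h2] at hrec
      have hbk := (hb k).ne'
      have hk : P k x = 0 := by
        rcases mul_eq_zero.mp (by linarith : b k * P k x = 0) with h | h
        · exact absurd h hbk
        · exact h
      rcases ih with h | h
      · exact h hk
      · exact h h1
  have hrec := hPrec m x
  have hb1 := hb (m + 1)
  have hbm := hb m
  obtain ⟨hl, hr⟩ := abs_lt.mp hx
  have hsub : b (m + 1) * P (m + 2) x
      = (x - a (m + 1)) * P (m + 1) x - b m * P m x := by linarith
  have key : 0 < b (m + 1) *
      (b (m + 1) * P (m + 1) x ^ 2 - b m * P m x * P (m + 1 + 1) x) := by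
    have e : b (m + 1) *
        (b (m + 1) * P (m + 1) x ^ 2 - b m * P m x * P (m + 1 + 1) x)
        = b (m + 1) * b (m + 1) * P (m + 1) x ^ 2
          - (x - a (m + 1)) * (b m * P m x) * P (m + 1) x
          + (b m * P m x) ^ 2 := by
      have h2 : P (m + 1 + 1) x = P (m + 2) x := rfl
      rw [h2]
      linear_combination (-(b m * P m x)) * hsub
    rw [e]
    rcases hnz m with hv | hu
    · have hv2 : 0 < (b m * P m x) ^ 2 := by positivity
      nlinarith [sq_nonneg (2 * (b (m + 1) * b (m + 1)) * P (m + 1) x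
          - (x - a (m + 1)) * (b m * P m x)),
        mul_pos (mul_pos (by linarith : (0:ℝ) < 2 * b (m + 1) - (x - a (m + 1)))
          (by linarith : (0:ℝ) < 2 * b (m + 1) + (x - a (m + 1)))) hv2,
        mul_pos hb1 hb1]
    · have hu2 : 0 < P (m + 1) x ^ 2 := by positivity
      nlinarith [sq_nonneg (2 * (b m * P m x) - (x - a (m + 1)) * P (m + 1) x),
        mul_pos (mul_pos (by linarith : (0:ℝ) < 2 * b (m + 1) - (x - a (m + 1)))
          (by linarith : (0:ℝ) < 2 * b (m + 1) + (x - a (m + 1)))) hu2]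
  nlinarith [key, hb1]
end

section
/- Let (a_n)_{n≥0} be a real sequence, (b_n)_{n≥0} a positive real sequence, and let P_n be the first-type polynomials of the associated Jacobi matrix. Let 0 < q < 1, n ≥ 1, and x ∈ ℝ with |x − a_n| ≤ 2 b_n q. Then (1 − q) · b_n (P_{n+1}(x)² + P_n(x)²) ≤ b_n P_n(x)² − b_{n−1} P_{n−1}(x) P_{n+1}(x) ≤ (1 + q) · b_n (P_{n+1}(x)² + P_n(x)²). -/
/-- If `0 < q < 1` and `|x − a_n| ≤ 2 b_n q`, then
`(1−q) b_n (P_{n+1}² + P_n²) ≤ b_n P_n² − b_{n-1} P_{n-1} P_{n+1} ≤ (1+q) b_n (P_{n+1}² + P_n²)`. -/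
theorem stmt16 (a : ℕ → ℝ) (b : ℕ → ℝ) (hb : ∀ n, 0 < b n)
    (P : ℕ → ℝ → ℝ)
    (hP0 : ∀ x : ℝ, P 0 x = 1)
    (hP1 : ∀ x : ℝ, P 1 x = (x - a 0) / b 0)
    (hPrec : ∀ (n : ℕ) (x : ℝ),
      b n * P n x + a (n + 1) * P (n + 1) x + b (n + 1) * P (n + 2) x = x * P (n + 1) x)
    (q : ℝ) (hq0 : 0 < q) (hq1 : q < 1)
    (n : ℕ) (hn : 1 ≤ n) (x : ℝ) (hx : |x - a n| ≤ 2 * b n * q) :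
    (1 - q) * (b n * (P (n + 1) x ^ 2 + P n x ^ 2))
        ≤ b n * P n x ^ 2 - b (n - 1) * P (n - 1) x * P (n + 1) x ∧
    b n * P n x ^ 2 - b (n - 1) * P (n - 1) x * P (n + 1) x
        ≤ (1 + q) * (b n * (P (n + 1) x ^ 2 + P n x ^ 2)) := by
  obtain ⟨m, rfl⟩ := Nat.exists_eq_add_of_le hn
  rw [show (1:ℕ) + m = m + 1 from by omega] at hx ⊢
  rw [show m + 1 - 1 = m from by omega]
  have hrec : b m * P m x + a (m + 1) * P (m + 1) x + b (m + 1) * P (m + 1 + 1) x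
      = x * P (m + 1) x := hPrec m x
  have key : b (m + 1) * P (m + 1) x ^ 2 - b m * P m x * P (m + 1 + 1) x
      = b (m + 1) * (P (m + 1 + 1) x ^ 2 + P (m + 1) x ^ 2)
        - (x - a (m + 1)) * (P (m + 1) x * P (m + 1 + 1) x) := by
    linear_combination (-(P (m + 1 + 1) x)) * hrec
  have habs : |(x - a (m + 1)) * (P (m + 1) x * P (m + 1 + 1) x)|
      ≤ q * (b (m + 1) * (P (m + 1 + 1) x ^ 2 + P (m + 1) x ^ 2)) := by
    rw [abs_mul]
    have h2 : |P (m + 1) x * P (m + 1 + 1) x| * 2 ≤ P (m + 1 + 1) x ^ 2 + P (m + 1) x ^ 2 := by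
      rw [abs_mul]
      nlinarith [abs_nonneg (P (m + 1) x), abs_nonneg (P (m + 1 + 1) x),
        sq_abs (P (m + 1) x), sq_abs (P (m + 1 + 1) x),
        sq_nonneg (|P (m + 1) x| - |P (m + 1 + 1) x|)]
    nlinarith [hb (m + 1), abs_nonneg (P (m + 1) x * P (m + 1 + 1) x),
      abs_nonneg (x - a (m + 1))]
  have h3 := abs_le.mp habs
  constructor <;> [nlinarith [h3.2]; nlinarith [h3.1]]
end

section
/- Let (a_n)_{n≥0} be a real sequence and (b_n)_{n≥0} a positive real sequence such that: (1) b_n → +∞; (2) a_n/b_n → s with |s| < 2; (3) b_n/b_{n+1} → 1; (4) the sequences (b_{n−1}/b_n − b_{n−2}/b_{n−1}), (1/b_n − 1/b_{n−1}), and (a_n/b_n − a_{n−1}/b_{n−1}) are absolutely summable. Let P_n be the first-type polynomials of the associated Jacobi matrix and Δ_n(x) = b_n P_n(x)² − b_{n−1} P_{n−1}(x) P_{n+1}(x). Then for every finite interval [a,b] there exist a constant C and an index N such that Δ_n(x) ≤ C for all n ≥ N and all x ∈ [a,b]. -/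
open Filter

set_option maxHeartbeats 1000000

private lemma turan_diff (bk bk1 ak ak1 x p v w : ℝ) (hbk : bk ≠ 0) (hbk1 : bk1 ≠ 0)
    (hrec : bk * p + ak1 * v + bk1 * w = x * v) :
    (bk1 * (v^2 + w^2) - (x - ak1) * v * w) - (bk * (p^2 + v^2) - (x - ak) * p * v)
      = (1 - bk / bk1) * (bk1 * v^2 - bk * p^2)
        - (x * (1/bk1 - 1/bk) - (ak1/bk1 - ak/bk)) * (bk * p * v) := by
  have hw : w = ((x - ak1) * v - bk * p) / bk1 := by field_simp; linarith
  rw [hw]; field_simp; ring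

private lemma turan_pos (bk bk1 c p v r : ℝ) (hbk : 0 < bk) (hbk1 : 0 < bk1)
    (hc : |c| ≤ r * bk) (h2 : bk1 ≤ 2 * bk) (hr1 : 1 ≤ r) (hr2 : r < 2) :
    ((2 - r)/4) * (bk * p^2 + bk1 * v^2) ≤ bk * (p^2 + v^2) - c * p * v := by
  have h := abs_le.mp hc
  nlinarith [mul_nonneg (by linarith : (0:ℝ) ≤ r*bk - c) (sq_nonneg (p+v)),
    mul_nonneg (by linarith : (0:ℝ) ≤ r*bk + c) (sq_nonneg (p-v)),
    mul_nonneg (mul_nonneg (by linarith : (0:ℝ) ≤ 2-r) (by linarith : (0:ℝ) ≤ 2*bk - bk1)) (sq_nonneg v),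
    mul_nonneg hbk.le (sq_nonneg p)]

private lemma turan_cross (bk bk1 p v : ℝ) (hbk : 0 < bk) (h : bk ≤ 2 * bk1) :
    |bk * p * v| ≤ bk * p^2 + bk1 * v^2 := by
  rw [abs_le]
  constructor <;> nlinarith [sq_nonneg (p - v), sq_nonneg (p + v)]

/-- Under the conditions (1) `b_n → ∞`, (2) `a_n/b_n → s` with `|s| < 2`,
(3) `b_n/b_{n+1} → 1`, (4) absolute summability of `(b_{n-1}/b_n − b_{n-2}/b_{n-1})`,
`(1/b_n − 1/b_{n-1})`, `(a_n/b_n − a_{n-1}/b_{n-1})`, the Turán-type determinants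
`Δ_n(x) = b_n P_n(x)² − b_{n-1} P_{n-1}(x) P_{n+1}(x)` are eventually uniformly bounded
on every finite interval `[A,B]`. -/
theorem stmt18 (a : ℕ → ℝ) (b : ℕ → ℝ) (hb : ∀ n, 0 < b n)
    (h1 : Tendsto b atTop atTop)
    (s : ℝ) (hs : |s| < 2)
    (h2 : Tendsto (fun n => a n / b n) atTop (nhds s))
    (h3 : Tendsto (fun n => b n / b (n + 1)) atTop (nhds 1))
    (h4a : Summable (fun n : ℕ => |b (n + 1) / b (n + 2) - b n / b (n + 1)|))
    (h4b : Summable (fun n : ℕ => |1 / b (n + 1) - 1 / b n|))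
    (h4c : Summable (fun n : ℕ => |a (n + 1) / b (n + 1) - a n / b n|))
    (P : ℕ → ℝ → ℝ)
    (hP0 : ∀ x : ℝ, P 0 x = 1)
    (hP1 : ∀ x : ℝ, P 1 x = (x - a 0) / b 0)
    (hPrec : ∀ (n : ℕ) (x : ℝ),
      b n * P n x + a (n + 1) * P (n + 1) x + b (n + 1) * P (n + 2) x = x * P (n + 1) x)
    (A B : ℝ) (hAB : A ≤ B) :
    ∃ C : ℝ, ∃ N : ℕ, ∀ n ≥ N, ∀ x ∈ Set.Icc A B,
      b n * P n x ^ 2 - b (n - 1) * P (n - 1) x * P (n + 1) x ≤ C := by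
  have hbne : ∀ n, b n ≠ 0 := fun n => (hb n).ne'
  have habs : (0:ℝ) ≤ |s| := abs_nonneg s
  -- constants
  obtain ⟨r, hrdef⟩ : ∃ y : ℝ, y = (|s| + 2)/2 := ⟨_, rfl⟩
  obtain ⟨δ, hδdef⟩ : ∃ y : ℝ, y = (2 - r)/4 := ⟨_, rfl⟩
  obtain ⟨e1, he1def⟩ : ∃ y : ℝ, y = (2 - |s|)/4 := ⟨_, rfl⟩
  obtain ⟨X, hXdef⟩ : ∃ y : ℝ, y = max |A| |B| := ⟨_, rfl⟩
  have hr1 : 1 ≤ r := by rw [hrdef]; linarith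
  have hr2 : r < 2 := by rw [hrdef]; linarith
  have hδpos : 0 < δ := by rw [hδdef]; linarith
  have hδ14 : δ ≤ 1/4 := by rw [hδdef]; linarith
  have he1 : 0 < e1 := by rw [he1def]; linarith
  have hre : |s| + 2*e1 = r := by rw [he1def, hrdef]; ring
  have hXnn : 0 ≤ X := by rw [hXdef]; exact le_trans (abs_nonneg A) (le_max_left _ _)
  have hxX : ∀ x ∈ Set.Icc A B, |x| ≤ X := by
    intro x hx
    rw [hXdef, abs_le]
    constructor
    · have h1' := le_max_left |A| |B|
      have h2 := neg_abs_le A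
      linarith [hx.1]
    · have := le_max_right |A| |B|
      linarith [hx.2, le_abs_self B]
  -- recurrence solved for P (n+2)
  have hPrec' : ∀ n x, P (n+2) x = ((x - a (n+1)) * P (n+1) x - b n * P n x) / b (n+1) := by
    intro n x
    have h := hPrec n x
    have hb1 := hbne (n+1)
    field_simp
    linarith
  -- continuity of each P n
  have hcont : ∀ n, Continuous (fun x => P n x) := by
    have key : ∀ n, Continuous (fun x => P n x) ∧ Continuous (fun x => P (n+1) x) := by
      intro n
      induction n with
      | zero =>
        constructor
        · simp only [hP0]; exact continuous_const
        · simp only [hP1]; exact (continuous_id.sub continuous_const).div_const _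
      | succ n ih =>
        refine ⟨ih.2, ?_⟩
        have heq : (fun x => P (n+2) x) = fun x => ((x - a (n+1)) * P (n+1) x - b n * P n x) / b (n+1) :=
          funext (hPrec' n)
        rw [heq]
        exact (((continuous_id.sub continuous_const).mul ih.2).sub (continuous_const.mul ih.1)).div_const _
    exact fun n => (key n).1
  -- eventual bounds
  obtain ⟨N1, hN1⟩ := eventually_atTop.1 (h1.eventually_ge_atTop (max 1 (X/e1)))
  obtain ⟨N2, hN2⟩ := Metric.tendsto_atTop.1 h2 e1 he1
  obtain ⟨N3, hN3⟩ := Metric.tendsto_atTop.1 h3 (δ/2) (by linarith)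
  obtain ⟨N₀, hN₀def⟩ : ∃ y : ℕ, y = max N1 (max N2 N3) := ⟨_, rfl⟩
  have hk1 : ∀ k, N₀ ≤ k → max 1 (X/e1) ≤ b k := by
    intro k hk
    rw [hN₀def] at hk
    exact hN1 k (by omega)
  have hk2 : ∀ k, N₀ ≤ k → |a k / b k - s| ≤ e1 := by
    intro k hk
    rw [hN₀def] at hk
    have := hN2 k (by omega)
    rw [Real.dist_eq] at this
    exact this.le
  have hk3 : ∀ k, N₀ ≤ k → |b k / b (k+1) - 1| ≤ δ/2 := by
    intro k hk
    rw [hN₀def] at hk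
    have := hN3 k (by omega)
    rw [Real.dist_eq] at this
    exact this.le
  -- consequences
  have hC1 : ∀ k, N₀ ≤ k → ∀ x ∈ Set.Icc A B, |x - a k| ≤ r * b k := by
    intro k hk x hx
    have hbk := hb k
    have hXb : X ≤ e1 * b k := by
      have h1' : X/e1 ≤ b k := le_trans (le_max_right _ _) (hk1 k hk)
      rw [div_le_iff₀ he1] at h1'
      linarith
    have hak : |a k| ≤ (|s| + e1) * b k := by
      have h0 : a k = (a k / b k) * b k := (div_mul_cancel₀ _ (hbne k)).symm
      have h5 : |a k| = |a k / b k| * b k := by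
        rw [h0, abs_mul, abs_of_pos hbk]
        rw [← h0]
      rw [h5]
      have h6 : |a k / b k| ≤ |s| + e1 := by
        have := hk2 k hk
        have h7 := abs_sub_abs_le_abs_sub (a k / b k) s
        linarith
      exact mul_le_mul_of_nonneg_right h6 hbk.le
    calc |x - a k| ≤ |x| + |a k| := abs_sub x (a k)
      _ ≤ X + (|s| + e1) * b k := add_le_add (hxX x hx) hak
      _ ≤ e1 * b k + (|s| + e1) * b k := by linarith
      _ = (|s| + 2*e1) * b k := by ring
      _ = r * b k := by rw [hre]
  have hC2 : ∀ k, N₀ ≤ k → b (k+1) ≤ 2 * b k := by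
    intro k hk
    have h := abs_le.1 (hk3 k hk)
    have h5 : 1/2 ≤ b k / b (k+1) := by linarith
    rw [le_div_iff₀ (hb (k+1))] at h5
    linarith
  have hC3 : ∀ k, N₀ ≤ k → b k ≤ 2 * b (k+1) := by
    intro k hk
    have h := abs_le.1 (hk3 k hk)
    have h5 : b k / b (k+1) ≤ 2 := by linarith
    rw [div_le_iff₀ (hb (k+1))] at h5
    linarith
  -- the key quantities
  obtain ⟨w, hwdef⟩ : ∃ y : ℕ → ℝ → ℝ, y = fun k x => b k * P k x ^ 2 := ⟨_, rfl⟩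
  obtain ⟨E, hEdef⟩ : ∃ y : ℕ → ℝ → ℝ, y = fun k x => b k * (P k x ^ 2 + P (k+1) x ^ 2) - (x - a k) * P k x * P (k+1) x := ⟨_, rfl⟩
  obtain ⟨F, hFdef⟩ : ∃ y : ℕ → ℝ → ℝ, y = fun k x => E (k+1) x - (1 - b k / b (k+1)) * w (k+1) x := ⟨_, rfl⟩
  obtain ⟨c, hcdef⟩ : ∃ y : ℕ → ℝ, y = fun k => |b (k+1)/b (k+2) - b k/b (k+1)| + X * |1/b (k+2) - 1/b (k+1)|
      + |a (k+2)/b (k+2) - a (k+1)/b (k+1)| := ⟨_, rfl⟩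
  have hwnn : ∀ k x, 0 ≤ w k x := by
    intro k x
    simp only [hwdef]
    exact mul_nonneg (hb k).le (sq_nonneg _)
  have hc0 : ∀ k, 0 ≤ c k := by
    intro k
    rw [hcdef]
    have := abs_nonneg (b (k+1)/b (k+2) - b k/b (k+1))
    have := abs_nonneg (1/b (k+2) - 1/b (k+1))
    have := abs_nonneg (a (k+2)/b (k+2) - a (k+1)/b (k+1))
    have := mul_nonneg hXnn (abs_nonneg (1/b (k+2) - 1/b (k+1)))
    linarith
  have hcsum : Summable c := by
    rw [hcdef]
    have hs2 : Summable (fun k : ℕ => |1 / b (k+2) - 1 / b (k+1)|) := by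
      have := (summable_nat_add_iff 1).2 h4b
      simpa using this
    have hs3 : Summable (fun k : ℕ => |a (k+2) / b (k+2) - a (k+1) / b (k+1)|) := by
      have := (summable_nat_add_iff 1).2 h4c
      simpa using this
    exact (h4a.add (hs2.mul_left X)).add hs3
  obtain ⟨T, hTdef⟩ : ∃ y : ℝ, y = ∑' k, c k := ⟨_, rfl⟩
  -- positive definiteness of E
  have hE_pos : ∀ k, N₀ ≤ k → ∀ x ∈ Set.Icc A B, δ * (w k x + w (k+1) x) ≤ E k x := by
    intro k hk x hx
    have := turan_pos (b k) (b (k+1)) (x - a k) (P k x) (P (k+1) x) r (hb k) (hb (k+1))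
      (hC1 k hk x hx) (hC2 k hk) hr1 hr2
    simp only [hEdef, hwdef, hδdef]
    nlinarith [this]
  have hE_nn : ∀ k, N₀ ≤ k → ∀ x ∈ Set.Icc A B, 0 ≤ E k x := by
    intro k hk x hx
    have := hE_pos k hk x hx
    have h1' := hwnn k x
    have h2' := hwnn (k+1) x
    nlinarith
  -- F vs E comparison
  have hF_lb : ∀ k, N₀ ≤ k → ∀ x ∈ Set.Icc A B, E (k+1) x / 2 ≤ F k x := by
    intro k hk x hx
    have hq := hk3 k hk
    have hw1 := hwnn (k+1) x
    have hw2 := hwnn (k+2) x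
    have hEp := hE_pos (k+1) (by omega) x hx
    have hA1 : (1 - b k / b (k+1)) * w (k+1) x ≤ |1 - b k / b (k+1)| * w (k+1) x :=
      mul_le_mul_of_nonneg_right (le_abs_self _) hw1
    have hA2 : |1 - b k / b (k+1)| * w (k+1) x ≤ (δ/2) * w (k+1) x := by
      have : |1 - b k / b (k+1)| ≤ δ/2 := by rw [abs_sub_comm]; exact hq
      exact mul_le_mul_of_nonneg_right this hw1
    have hA3 : δ * w (k+1) x ≤ E (k+1) x := by nlinarith
    simp only [hFdef]
    nlinarith
  -- step inequality
  have hstep : ∀ k, N₀ ≤ k → ∀ x ∈ Set.Icc A B,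
      F (k+1) x ≤ (1 + 2/δ * c k) * F k x := by
    intro k hk x hx
    -- difference identity
    have hdiff : E (k+2) x - E (k+1) x
        = (1 - b (k+1) / b (k+2)) * (w (k+2) x - w (k+1) x)
          - (x * (1/b (k+2) - 1/b (k+1)) - (a (k+2)/b (k+2) - a (k+1)/b (k+1)))
            * (b (k+1) * P (k+1) x * P (k+2) x) := by
      have := turan_diff (b (k+1)) (b (k+2)) (a (k+1)) (a (k+2)) x
        (P (k+1) x) (P (k+2) x) (P (k+3) x) (hbne (k+1)) (hbne (k+2)) (hPrec (k+1) x)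
      simp only [hEdef, hwdef]
      linarith [this]
    have hFd : F (k+1) x - F k x
        = (b (k+1)/b (k+2) - b k/b (k+1)) * w (k+1) x
          - (x * (1/b (k+2) - 1/b (k+1)) - (a (k+2)/b (k+2) - a (k+1)/b (k+1)))
            * (b (k+1) * P (k+1) x * P (k+2) x) := by
      simp only [hFdef]
      linarith [hdiff]
    obtain ⟨θ, hθdef⟩ : ∃ y : ℝ, y = x * (1/b (k+2) - 1/b (k+1)) - (a (k+2)/b (k+2) - a (k+1)/b (k+1)) := ⟨_, rfl⟩
    obtain ⟨t, htdef⟩ : ∃ y : ℝ, y = b (k+1) * P (k+1) x * P (k+2) x := ⟨_, rfl⟩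
    have hw1 := hwnn (k+1) x
    have hw2 := hwnn (k+2) x
    have hθb : |θ| ≤ X * |1/b (k+2) - 1/b (k+1)| + |a (k+2)/b (k+2) - a (k+1)/b (k+1)| := by
      rw [hθdef]
      calc |x * (1/b (k+2) - 1/b (k+1)) - (a (k+2)/b (k+2) - a (k+1)/b (k+1))|
          ≤ |x * (1/b (k+2) - 1/b (k+1))| + |a (k+2)/b (k+2) - a (k+1)/b (k+1)| := abs_sub _ _
        _ ≤ X * |1/b (k+2) - 1/b (k+1)| + |a (k+2)/b (k+2) - a (k+1)/b (k+1)| := by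
            rw [abs_mul]
            have := mul_le_mul_of_nonneg_right (hxX x hx) (abs_nonneg (1/b (k+2) - 1/b (k+1)))
            linarith
    have htb : |t| ≤ w (k+1) x + w (k+2) x := by
      simp only [htdef, hwdef]
      exact turan_cross (b (k+1)) (b (k+2)) (P (k+1) x) (P (k+2) x) (hb (k+1)) (hC3 (k+1) (by omega))
    have hθt : -(θ * t) ≤ (X * |1/b (k+2) - 1/b (k+1)| + |a (k+2)/b (k+2) - a (k+1)/b (k+1)|)
        * (w (k+1) x + w (k+2) x) := by
      have h0 : -(θ * t) ≤ |θ * t| := neg_le_abs _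
      have h1' : |θ * t| = |θ| * |t| := abs_mul _ _
      have h2' : |θ| * |t| ≤ (X * |1/b (k+2) - 1/b (k+1)| + |a (k+2)/b (k+2) - a (k+1)/b (k+1)|)
          * (w (k+1) x + w (k+2) x) :=
        mul_le_mul hθb htb (abs_nonneg t) (le_trans (abs_nonneg θ) hθb)
      linarith
    rw [hθdef, htdef] at hθt
    have hqw : (b (k+1)/b (k+2) - b k/b (k+1)) * w (k+1) x
        ≤ |b (k+1)/b (k+2) - b k/b (k+1)| * (w (k+1) x + w (k+2) x) := by
      have h0 : (b (k+1)/b (k+2) - b k/b (k+1)) * w (k+1) x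
          ≤ |b (k+1)/b (k+2) - b k/b (k+1)| * w (k+1) x :=
        mul_le_mul_of_nonneg_right (le_abs_self _) hw1
      have h1' : |b (k+1)/b (k+2) - b k/b (k+1)| * w (k+1) x
          ≤ |b (k+1)/b (k+2) - b k/b (k+1)| * (w (k+1) x + w (k+2) x) :=
        mul_le_mul_of_nonneg_left (by linarith) (abs_nonneg _)
      linarith
    have hsum1 : F (k+1) x ≤ F k x + c k * (w (k+1) x + w (k+2) x) := by
      have hc_eq : c k * (w (k+1) x + w (k+2) x)
          = |b (k+1)/b (k+2) - b k/b (k+1)| * (w (k+1) x + w (k+2) x)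
            + (X * |1/b (k+2) - 1/b (k+1)| + |a (k+2)/b (k+2) - a (k+1)/b (k+1)|)
              * (w (k+1) x + w (k+2) x) := by
        rw [hcdef]; ring
      linarith [hFd, hθt, hqw]
    have hEp := hE_pos (k+1) (by omega) x hx
    have hFlb := hF_lb k hk x hx
    have hEnn := hE_nn (k+1) (by omega) x hx
    have hck := hc0 k
    -- c k * (w+w) ≤ (c k/δ) * E (k+1) ≤ (c k/δ) * (2 F k)
    have hB1 : c k * (w (k+1) x + w (k+2) x) ≤ c k / δ * E (k+1) x := by
      rw [div_mul_eq_mul_div, le_div_iff₀ hδpos]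
      calc c k * (w (k+1) x + w (k+2) x) * δ = c k * (δ * (w (k+1) x + w (k+2) x)) := by ring
        _ ≤ c k * E (k+1) x := mul_le_mul_of_nonneg_left hEp hck
    have hB2 : c k / δ * E (k+1) x ≤ c k / δ * (2 * F k x) := by
      apply mul_le_mul_of_nonneg_left _ (div_nonneg hck hδpos.le)
      linarith
    have hB3 : c k / δ * (2 * F k x) = 2/δ * c k * F k x := by ring
    have hgoal : (1 + 2/δ * c k) * F k x = F k x + 2/δ * c k * F k x := by ring
    linarith
  -- product bound by induction
  have hFnn : ∀ k, N₀ ≤ k → ∀ x ∈ Set.Icc A B, 0 ≤ F k x := by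
    intro k hk x hx
    have := hF_lb k hk x hx
    have := hE_nn (k+1) (by omega) x hx
    linarith
  have hmain : ∀ n, ∀ x ∈ Set.Icc A B,
      F (N₀ + n) x ≤ F N₀ x * ∏ k ∈ Finset.Ico N₀ (N₀ + n), (1 + 2/δ * c k) := by
    intro n
    induction n with
    | zero => intro x hx; simp
    | succ n ih =>
      intro x hx
      have hstep' := hstep (N₀ + n) (by omega) x hx
      have ih' := ih x hx
      have hnn : (0:ℝ) ≤ 1 + 2/δ * c (N₀ + n) := by
        have := hc0 (N₀ + n)
        have : 0 ≤ 2/δ * c (N₀ + n) := mul_nonneg (by positivity) this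
        linarith
      have hprodtop : ∏ k ∈ Finset.Ico N₀ (N₀ + (n+1)), (1 + 2/δ * c k)
          = (∏ k ∈ Finset.Ico N₀ (N₀ + n), (1 + 2/δ * c k)) * (1 + 2/δ * c (N₀ + n)) := by
        have : N₀ + (n + 1) = (N₀ + n) + 1 := rfl
        rw [this, Finset.prod_Ico_succ_top (Nat.le_add_right N₀ n)]
      calc F (N₀ + (n+1)) x = F ((N₀ + n) + 1) x := rfl
        _ ≤ (1 + 2/δ * c (N₀ + n)) * F (N₀ + n) x := hstep'
        _ ≤ (1 + 2/δ * c (N₀ + n)) * (F N₀ x * ∏ k ∈ Finset.Ico N₀ (N₀ + n), (1 + 2/δ * c k)) :=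
            mul_le_mul_of_nonneg_left ih' hnn
        _ = F N₀ x * ∏ k ∈ Finset.Ico N₀ (N₀ + (n+1)), (1 + 2/δ * c k) := by
            rw [hprodtop]; ring
  have hprodbd : ∀ n, ∏ k ∈ Finset.Ico N₀ (N₀ + n), (1 + 2/δ * c k) ≤ Real.exp (2/δ * T) := by
    intro n
    have h0 : ∀ i ∈ Finset.Ico N₀ (N₀ + n), (0:ℝ) ≤ 1 + 2/δ * c i := by
      intro i _
      have := mul_nonneg (by positivity : (0:ℝ) ≤ 2/δ) (hc0 i)
      linarith
    calc ∏ k ∈ Finset.Ico N₀ (N₀ + n), (1 + 2/δ * c k)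
        ≤ ∏ k ∈ Finset.Ico N₀ (N₀ + n), Real.exp (2/δ * c k) := by
          apply Finset.prod_le_prod h0
          intro i _
          linarith [Real.add_one_le_exp (2/δ * c i)]
      _ = Real.exp (∑ k ∈ Finset.Ico N₀ (N₀ + n), 2/δ * c k) := (Real.exp_sum _ _).symm
      _ ≤ Real.exp (2/δ * T) := by
          apply Real.exp_le_exp.2
          rw [← Finset.mul_sum]
          apply mul_le_mul_of_nonneg_left _ (by positivity : (0:ℝ) ≤ 2/δ)
          rw [hTdef]
          exact Summable.sum_le_tsum _ (fun i _ => hc0 i) hcsum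
  -- sup of F N₀ on the interval
  obtain ⟨g, hgdef⟩ : ∃ y : ℝ → ℝ, y = fun x => |E (N₀+1) x| + w (N₀+1) x := ⟨_, rfl⟩
  have hgcont : Continuous g := by
    simp only [hgdef, hEdef, hwdef]
    refine Continuous.add (Continuous.abs ?_) ?_
    · exact (continuous_const.mul ((hcont (N₀+1)).pow 2 |>.add ((hcont (N₀+2)).pow 2))).sub
        (((continuous_id.sub continuous_const).mul (hcont (N₀+1))).mul (hcont (N₀+2)))
    · exact continuous_const.mul ((hcont (N₀+1)).pow 2)
  obtain ⟨x₀, hx₀, hx₀max⟩ := isCompact_Icc.exists_isMaxOn (Set.nonempty_Icc.2 hAB) hgcont.continuousOn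
  obtain ⟨M, hMdef⟩ : ∃ y : ℝ, y = g x₀ := ⟨_, rfl⟩
  have hMnn : 0 ≤ M := by
    simp only [hMdef, hgdef]
    have := abs_nonneg (E (N₀+1) x₀)
    have := hwnn (N₀+1) x₀
    linarith
  have hFNbd : ∀ x ∈ Set.Icc A B, F N₀ x ≤ M := by
    intro x hx
    have hq := hk3 N₀ (le_refl N₀)
    have hw1 := hwnn (N₀+1) x
    have h1' : -((1 - b N₀ / b (N₀+1)) * w (N₀+1) x) ≤ |1 - b N₀ / b (N₀+1)| * w (N₀+1) x := by
      have := neg_abs_le ((1 - b N₀ / b (N₀+1)) * w (N₀+1) x)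
      rw [abs_mul, abs_of_nonneg hw1] at this
      linarith
    have h2' : |1 - b N₀ / b (N₀+1)| * w (N₀+1) x ≤ 1 * w (N₀+1) x := by
      apply mul_le_mul_of_nonneg_right _ hw1
      rw [abs_sub_comm]
      linarith [hq]
    have h3' : F N₀ x ≤ |E (N₀+1) x| + w (N₀+1) x := by
      simp only [hFdef]
      have := le_abs_self (E (N₀+1) x)
      linarith
    calc F N₀ x ≤ |E (N₀+1) x| + w (N₀+1) x := h3'
      _ = g x := by simp only [hgdef]
      _ ≤ M := by rw [hMdef]; exact hx₀max hx
  -- conclusion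
  refine ⟨2 * (M * Real.exp (2/δ * T)), N₀ + 1, ?_⟩
  intro n hn x hx
  obtain ⟨m, rfl⟩ : ∃ m, n = m + 1 := ⟨n - 1, by omega⟩
  have hm : N₀ ≤ m := by omega
  simp only [Nat.add_sub_cancel]
  have hEq : b (m+1) * P (m+1) x ^ 2 - b m * P m x * P (m+1+1) x = E (m+1) x := by
    simp only [hEdef]
    linear_combination (-(P (m+2) x)) * hPrec m x
  rw [hEq]
  have hFl := hF_lb m hm x hx
  obtain ⟨j, rfl⟩ : ∃ j, m = N₀ + j := ⟨m - N₀, by omega⟩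
  have hchain := hmain j x hx
  have hpb := hprodbd j
  have hFNx := hFNbd x hx
  have hFNnn := hFnn N₀ (le_refl N₀) x hx
  have hprodnn : (0:ℝ) ≤ ∏ k ∈ Finset.Ico N₀ (N₀ + j), (1 + 2/δ * c k) := by
    apply Finset.prod_nonneg
    intro i _
    have := mul_nonneg (by positivity : (0:ℝ) ≤ 2/δ) (hc0 i)
    linarith
  have h5 : F N₀ x * ∏ k ∈ Finset.Ico N₀ (N₀ + j), (1 + 2/δ * c k)
      ≤ M * ∏ k ∈ Finset.Ico N₀ (N₀ + j), (1 + 2/δ * c k) :=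
    mul_le_mul_of_nonneg_right hFNx hprodnn
  have h6 : M * ∏ k ∈ Finset.Ico N₀ (N₀ + j), (1 + 2/δ * c k) ≤ M * Real.exp (2/δ * T) :=
    mul_le_mul_of_nonneg_left hpb hMnn
  linarith
end

section
/- Let (a_n)_{n≥0} be a real sequence and (b_n)_{n≥0} a positive real sequence such that: (1) b_n → +∞; (2) a_n/b_n → s with |s| < 2; (3) b_n/b_{n+1} → 1; (4) the sequences (b_{n−1}/b_n − b_{n−2}/b_{n−1}), (1/b_n − 1/b_{n−1}), and (a_n/b_n − a_{n−1}/b_{n−1}) are absolutely summable. Let P_n be the first-type polynomials of the associated Jacobi matrix and Δ_n(x) = b_n P_n(x)² − b_{n−1} P_{n−1}(x) P_{n+1}(x). Then for every finite interval [a,b] the sequence of functions Δ_n converges uniformly on [a,b] to a continuous function Δ satisfying Δ(x) > 0 for every x ∈ [a,b]. -/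
open Filter

lemma aux_absuv (u w : ℝ) : |u * w| ≤ (u^2 + w^2)/2 := by
  rw [abs_mul]
  nlinarith [sq_nonneg (|u| - |w|), sq_abs u, sq_abs w, abs_nonneg u, abs_nonneg w]

lemma aux_quad_lower {ε β τ : ℝ} (u w : ℝ) (hε : 0 < ε) (hβ : 1 - ε ≤ β) (hτ : |τ| ≤ 2 - 4*ε) :
    ε * (u^2 + w^2) ≤ β * u^2 - τ * (u * w) + w^2 := by
  have h1 := aux_absuv u w
  have h3 : |τ| * |u*w| ≤ (2 - 4*ε) * ((u^2 + w^2)/2) :=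
    mul_le_mul hτ h1 (abs_nonneg _) ((abs_nonneg τ).trans hτ)
  have h2 : τ * (u*w) ≤ (2 - 4*ε) * ((u^2 + w^2)/2) := by
    calc τ * (u*w) ≤ |τ * (u*w)| := le_abs_self _
    _ = |τ| * |u*w| := abs_mul _ _
    _ ≤ _ := h3
  have h4 : (1 - ε) * u^2 ≤ β * u^2 := mul_le_mul_of_nonneg_right hβ (sq_nonneg u)
  have h5 : 0 ≤ ε * w^2 := mul_nonneg hε.le (sq_nonneg w)
  nlinarith

lemma aux_quad_diff (dβ dτ u w : ℝ) : |dβ * u^2 - dτ * (u * w)| ≤ (|dβ| + |dτ|/2) * (u^2 + w^2) := by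
  have h1 := aux_absuv u w
  have h2 : |dβ * u^2 - dτ * (u*w)| ≤ |dβ| * u^2 + |dτ| * |u*w| := by
    rw [sub_eq_add_neg]
    refine (abs_add_le _ _).trans ?_
    rw [abs_neg, abs_mul, abs_mul, abs_of_nonneg (sq_nonneg u)]
  have h3 : |dτ| * |u*w| ≤ |dτ| * ((u^2+w^2)/2) := mul_le_mul_of_nonneg_left h1 (abs_nonneg _)
  nlinarith [mul_nonneg (abs_nonneg dβ) (sq_nonneg w)]

set_option maxHeartbeats 4000000 in
/-- Under the conditions (1) `b_n → ∞`, (2) `a_n/b_n → s` with `|s| < 2`,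
(3) `b_n/b_{n+1} → 1`, (4) absolute summability of `(b_{n-1}/b_n − b_{n-2}/b_{n-1})`,
`(1/b_n − 1/b_{n-1})`, `(a_n/b_n − a_{n-1}/b_{n-1})`, the functions
`Δ_n(x) = b_n P_n(x)² − b_{n-1} P_{n-1}(x) P_{n+1}(x)` converge uniformly on every finite
interval `[A,B]` to a continuous function `Δ` which is strictly positive on `[A,B]`. -/
theorem stmt19 (a : ℕ → ℝ) (b : ℕ → ℝ) (hb : ∀ n, 0 < b n)
    (h1 : Tendsto b atTop atTop)
    (s : ℝ) (hs : |s| < 2)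
    (h2 : Tendsto (fun n => a n / b n) atTop (nhds s))
    (h3 : Tendsto (fun n => b n / b (n + 1)) atTop (nhds 1))
    (h4a : Summable (fun n : ℕ => |b (n + 1) / b (n + 2) - b n / b (n + 1)|))
    (h4b : Summable (fun n : ℕ => |1 / b (n + 1) - 1 / b n|))
    (h4c : Summable (fun n : ℕ => |a (n + 1) / b (n + 1) - a n / b n|))
    (P : ℕ → ℝ → ℝ)
    (hP0 : ∀ x : ℝ, P 0 x = 1)
    (hP1 : ∀ x : ℝ, P 1 x = (x - a 0) / b 0)
    (hPrec : ∀ (n : ℕ) (x : ℝ),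
      b n * P n x + a (n + 1) * P (n + 1) x + b (n + 1) * P (n + 2) x = x * P (n + 1) x)
    (A B : ℝ) (hAB : A ≤ B) :
    ∃ Δ : ℝ → ℝ, ContinuousOn Δ (Set.Icc A B) ∧ (∀ x ∈ Set.Icc A B, 0 < Δ x) ∧
      TendstoUniformlyOn
        (fun (n : ℕ) (x : ℝ) => b n * P n x ^ 2 - b (n - 1) * P (n - 1) x * P (n + 1) x)
        Δ atTop (Set.Icc A B) := by
  classical
  set ε : ℝ := (2 - |s|)/8 with hεdef
  have hε : 0 < ε := by
    have := abs_nonneg s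
    simp only [hεdef]
    linarith
  set K : ℝ := max |A| |B| with hKdef
  have hK0 : 0 ≤ K := le_trans (abs_nonneg A) (le_max_left _ _)
  have hK : ∀ x ∈ Set.Icc A B, |x| ≤ K := by
    intro x hx
    rw [abs_le]
    constructor
    · have : -|A| ≤ A := neg_abs_le A
      have h' : |A| ≤ K := le_max_left _ _
      linarith [hx.1]
    · have : B ≤ |B| := le_abs_self B
      have h' : |B| ≤ K := le_max_right _ _
      linarith [hx.2]
  -- continuity of P n
  have hPcont : ∀ n, Continuous (P n) := by
    have key : ∀ n, Continuous (P n) ∧ Continuous (P (n+1)) := by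
      intro n
      induction n with
      | zero =>
        constructor
        · exact continuous_const.congr fun x => (hP0 x).symm
        · exact ((continuous_id.sub continuous_const).div_const _).congr fun x => (hP1 x).symm
      | succ n ih =>
        refine ⟨ih.2, ?_⟩
        have hb1 : b (n+1) ≠ 0 := (hb _).ne'
        have hcont : Continuous (fun x => ((x - a (n+1)) * P (n+1) x - b n * P n x) / b (n+1)) :=
          (((continuous_id.sub continuous_const).mul ih.2).sub (continuous_const.mul ih.1)).div_const _
        refine hcont.congr fun x => ?_
        have h := hPrec n x
        field_simp
        linarith
    exact fun n => (key n).1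
  -- consecutive values never both vanish
  have hPne : ∀ n x, ¬ (P n x = 0 ∧ P (n+1) x = 0) := by
    intro n
    induction n with
    | zero =>
      intro x hx
      rw [hP0 x] at hx
      exact one_ne_zero hx.1
    | succ n ih =>
      intro x hx
      have h := hPrec n x
      rw [hx.1, hx.2] at h
      simp at h
      exact ih x ⟨h.resolve_left (hb n).ne', hx.1⟩
  have hsq : ∀ n x, 0 < (P n x)^2 + (P (n+1) x)^2 := by
    intro n x
    have h : P n x ≠ 0 ∨ P (n+1) x ≠ 0 := by
      by_contra hc
      push_neg at hc
      exact hPne n x ⟨hc.1, hc.2⟩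
    rcases h with h | h
    · have := abs_pos.mpr h
      nlinarith [sq_abs (P n x), sq_nonneg (P (n+1) x)]
    · have := abs_pos.mpr h
      nlinarith [sq_abs (P (n+1) x), sq_nonneg (P n x)]
  -- the invariant-like quadratic form
  set Wf : ℕ → ℝ → ℝ := fun m x =>
    b m * ((b m / b (m+1)) * (P m x)^2
      - ((x - a (m+1)) / b (m+1)) * (P m x * P (m+1) x) + (P (m+1) x)^2) with hWf
  have hWcont : ∀ m, Continuous (fun x => Wf m x) := by
    intro m
    simp only [hWf]
    exact continuous_const.mul ((((continuous_const.mul ((hPcont m).pow 2)).sub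
      (((continuous_id.sub continuous_const).div_const _).mul ((hPcont m).mul (hPcont (m+1))))).add
      ((hPcont (m+1)).pow 2)))
  have hkey : ∀ m x, Wf m x = b (m+1) * ((b m / b (m+1)) * (P (m+1) x)^2
      - ((x - a (m+1)) / b (m+1)) * (P (m+1) x * P (m+2) x) + (P (m+2) x)^2) := by
    intro m x
    have hb1 : b (m+1) ≠ 0 := (hb _).ne'
    have hb0 : b m ≠ 0 := (hb _).ne'
    have h := hPrec m x
    have hw : P (m+2) x = ((x - a (m+1)) / b (m+1)) * P (m+1) x - (b m / b (m+1)) * P m x := by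
      field_simp
      linarith
    rw [hw]
    simp only [hWf]
    field_simp
    ring
  have hstep : ∀ m x, Wf (m+1) x - Wf m x
      = b (m+1) * ((b (m+1)/b (m+2) - b m/b (m+1)) * (P (m+1) x)^2
        - ((x - a (m+2))/b (m+2) - (x - a (m+1))/b (m+1)) * (P (m+1) x * P (m+2) x)) := by
    intro m x
    rw [hkey m x]
    simp only [hWf]
    ring
  -- summable coefficient sequence
  set C : ℕ → ℝ := fun n => |b (n+1)/b (n+2) - b n/b (n+1)|
      + (K * |1/b (n+2) - 1/b (n+1)| + |a (n+2)/b (n+2) - a (n+1)/b (n+1)|)/2 with hCdef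
  have hC0 : ∀ n, 0 ≤ C n := by
    intro n
    simp only [hCdef]
    positivity
  have hCsum : Summable C := by
    have s2 : Summable (fun n : ℕ => |1/b (n+2) - 1/b (n+1)|) := by
      have := (summable_nat_add_iff 1).mpr h4b
      exact this
    have s3 : Summable (fun n : ℕ => |a (n+2)/b (n+2) - a (n+1)/b (n+1)|) := by
      have := (summable_nat_add_iff 1).mpr h4c
      exact this
    exact h4a.add (((s2.mul_left K).add s3).div_const 2)
  -- eventual conditions
  have ev1 : ∀ᶠ m in atTop, 1 - ε ≤ b m / b (m+1) :=
    h3.eventually (eventually_ge_nhds (by linarith))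
  have ev2 : ∀ᶠ m in atTop, |a m / b m - s| ≤ ε := by
    have hball : ∀ᶠ y in nhds s, |y - s| ≤ ε := by
      filter_upwards [Metric.closedBall_mem_nhds s hε] with y hy
      rwa [Metric.mem_closedBall, Real.dist_eq] at hy
    exact h2.eventually hball
  have ev3 : ∀ᶠ m in atTop, K / b m ≤ ε := by
    filter_upwards [h1.eventually_ge_atTop (K/ε + 1)] with m hm
    rw [div_le_iff₀ (hb m)]
    have h' : ε * (K/ε + 1) ≤ ε * b m := mul_le_mul_of_nonneg_left hm hε.le
    have : ε * (K/ε + 1) = K + ε := by field_simp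
    linarith
  have ev4 : ∀ᶠ m in atTop, C m ≤ ε/2 :=
    hCsum.tendsto_atTop_zero.eventually (eventually_le_nhds (by linarith))
  obtain ⟨N, hN⟩ := eventually_atTop.1 ((ev1.and ev2).and (ev3.and ev4))
  -- lower bound for the quadratic form
  have hτb : ∀ m, N ≤ m → ∀ x ∈ Set.Icc A B, |(x - a (m+1)) / b (m+1)| ≤ 2 - 4*ε := by
    intro m hm x hx
    have hm1 : N ≤ m + 1 := le_trans hm (Nat.le_succ m)
    have hb1 := hb (m+1)
    have h2' : |a (m+1) / b (m+1) - s| ≤ ε := ((hN (m+1) hm1).1).2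
    have h3' : K / b (m+1) ≤ ε := ((hN (m+1) hm1).2).1
    have hxb : |x| / b (m+1) ≤ ε :=
      le_trans ((div_le_div_iff_of_pos_right hb1).mpr (hK x hx)) h3'
    have habs : |(x - a (m+1)) / b (m+1)| ≤ |x| / b (m+1) + |a (m+1) / b (m+1)| := by
      rw [sub_div]
      refine (abs_sub _ _).trans ?_
      rw [abs_div, abs_of_pos hb1]
    have hab : |a (m+1) / b (m+1)| ≤ |s| + ε := by
      calc |a (m+1) / b (m+1)| = |(a (m+1)/b (m+1) - s) + s| := by ring_nf
      _ ≤ |a (m+1)/b (m+1) - s| + |s| := abs_add_le _ _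
      _ ≤ |s| + ε := by linarith
    have : |s| = 2 - 8*ε := by simp only [hεdef]; ring
    linarith
  have hlow : ∀ m, N ≤ m → ∀ x ∈ Set.Icc A B,
      ε * (b m * ((P m x)^2 + (P (m+1) x)^2)) ≤ Wf m x := by
    intro m hm x hx
    have hq := aux_quad_lower (P m x) (P (m+1) x) hε ((hN m hm).1).1 (hτb m hm x hx)
    calc ε * (b m * ((P m x)^2 + (P (m+1) x)^2))
        = b m * (ε * ((P m x)^2 + (P (m+1) x)^2)) := by ring
      _ ≤ b m * ((b m / b (m+1)) * (P m x)^2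
          - ((x - a (m+1)) / b (m+1)) * (P m x * P (m+1) x) + (P (m+1) x)^2) :=
        mul_le_mul_of_nonneg_left hq (hb m).le
      _ = Wf m x := by simp only [hWf]
  have hpos : ∀ m, N ≤ m → ∀ x ∈ Set.Icc A B, 0 < Wf m x := by
    intro m hm x hx
    have h := hlow m hm x hx
    have := hsq m x
    nlinarith [hb m, mul_pos (hb m) (hsq m x)]
  -- summable step bound
  have hdiffb : ∀ m, ∀ x ∈ Set.Icc A B,
      |Wf (m+1) x - Wf m x| ≤ C m * (b (m+1) * ((P (m+1) x)^2 + (P (m+2) x)^2)) := by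
    intro m x hx
    set dβ := b (m+1)/b (m+2) - b m/b (m+1) with hdβ
    set dτ := (x - a (m+2))/b (m+2) - (x - a (m+1))/b (m+1) with hdτ
    have h1 : |Wf (m+1) x - Wf m x|
        = b (m+1) * |dβ * (P (m+1) x)^2 - dτ * (P (m+1) x * P (m+2) x)| := by
      rw [hstep m x, abs_mul, abs_of_pos (hb (m+1))]
    have h2 := aux_quad_diff dβ dτ (P (m+1) x) (P (m+2) x)
    have hτd : |dτ| ≤ K * |1/b (m+2) - 1/b (m+1)| + |a (m+2)/b (m+2) - a (m+1)/b (m+1)| := by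
      have hb1 : b (m+1) ≠ 0 := (hb _).ne'
      have hb2 : b (m+2) ≠ 0 := (hb _).ne'
      have hrepr : dτ = x * (1/b (m+2) - 1/b (m+1)) - (a (m+2)/b (m+2) - a (m+1)/b (m+1)) := by
        simp only [hdτ]
        field_simp
        ring
      rw [hrepr]
      refine (abs_sub _ _).trans ?_
      rw [abs_mul]
      have := mul_le_mul_of_nonneg_right (hK x hx) (abs_nonneg (1/b (m+2) - 1/b (m+1)))
      linarith
    have h3 : |dβ| + |dτ|/2 ≤ C m := by
      simp only [hCdef, hdβ]
      linarith
    calc |Wf (m+1) x - Wf m x|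
        ≤ b (m+1) * ((|dβ| + |dτ|/2) * ((P (m+1) x)^2 + (P (m+2) x)^2)) := by
          rw [h1]; exact mul_le_mul_of_nonneg_left h2 (hb (m+1)).le
      _ = (|dβ| + |dτ|/2) * (b (m+1) * ((P (m+1) x)^2 + (P (m+2) x)^2)) := by ring
      _ ≤ C m * (b (m+1) * ((P (m+1) x)^2 + (P (m+2) x)^2)) := by
          refine mul_le_mul_of_nonneg_right h3 ?_
          exact mul_nonneg (hb _).le (by positivity)
  have hdiff2 : ∀ m, N ≤ m → ∀ x ∈ Set.Icc A B,
      |Wf (m+1) x - Wf m x| ≤ (C m/ε) * Wf (m+1) x := by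
    intro m hm x hx
    have hS : b (m+1) * ((P (m+1) x)^2 + (P (m+2) x)^2) ≤ Wf (m+1) x / ε := by
      rw [le_div_iff₀ hε]
      have := hlow (m+1) (le_trans hm (Nat.le_succ m)) x hx
      linarith
    calc |Wf (m+1) x - Wf m x| ≤ C m * (b (m+1) * ((P (m+1) x)^2 + (P (m+2) x)^2)) :=
          hdiffb m x hx
      _ ≤ C m * (Wf (m+1) x / ε) := mul_le_mul_of_nonneg_left hS (hC0 m)
      _ = (C m/ε) * Wf (m+1) x := by ring
  -- one step up / down
  have hub : ∀ m, N ≤ m → ∀ x ∈ Set.Icc A B,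
      Wf (m+1) x ≤ Wf m x * Real.exp (2*(C m/ε)) := by
    intro m hm x hx
    set t := C m / ε with htdef
    have ht0 : 0 ≤ t := div_nonneg (hC0 m) hε.le
    have ht2 : t ≤ 1/2 := by
      rw [htdef, div_le_iff₀ hε]
      have := ((hN m hm).2).2
      linarith
    have habs := abs_le.1 (hdiff2 m hm x hx)
    have hW'0 : 0 ≤ Wf (m+1) x := (hpos (m+1) (le_trans hm (Nat.le_succ m)) x hx).le
    have hW0 : 0 ≤ Wf m x := (hpos m hm x hx).le
    have hle : Wf (m+1) x ≤ Wf m x * (1 + 2*t) := by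
      have f1 : Wf (m+1) x * (1 - t) * (1 + 2*t) ≤ Wf m x * (1 + 2*t) := by
        refine mul_le_mul_of_nonneg_right ?_ (by linarith)
        nlinarith [habs.2]
      nlinarith [mul_nonneg hW'0 (mul_nonneg ht0 (by linarith : (0:ℝ) ≤ 1 - 2*t))]
    have hexp : (1 + 2*t) ≤ Real.exp (2*t) := by
      have := Real.add_one_le_exp (2*t)
      linarith
    calc Wf (m+1) x ≤ Wf m x * (1 + 2*t) := hle
      _ ≤ Wf m x * Real.exp (2*t) := mul_le_mul_of_nonneg_left hexp hW0
  have hlb : ∀ m, N ≤ m → ∀ x ∈ Set.Icc A B,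
      Wf m x ≤ Wf (m+1) x * Real.exp (C m/ε) := by
    intro m hm x hx
    set t := C m / ε with htdef
    have ht0 : 0 ≤ t := div_nonneg (hC0 m) hε.le
    have habs := abs_le.1 (hdiff2 m hm x hx)
    have hW'0 : 0 ≤ Wf (m+1) x := (hpos (m+1) (le_trans hm (Nat.le_succ m)) x hx).le
    have hle : Wf m x ≤ Wf (m+1) x * (1 + t) := by nlinarith [habs.1]
    have hexp : (1 + t) ≤ Real.exp t := by
      have := Real.add_one_le_exp t
      linarith
    calc Wf m x ≤ Wf (m+1) x * (1 + t) := hle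
      _ ≤ Wf (m+1) x * Real.exp t := mul_le_mul_of_nonneg_left hexp hW'0
  -- extrema of Wf N on the interval
  have hicc : IsCompact (Set.Icc A B) := isCompact_Icc
  have hne : (Set.Icc A B).Nonempty := Set.nonempty_Icc.2 hAB
  obtain ⟨xM, hxM, hxMmax'⟩ := hicc.exists_isMaxOn hne ((hWcont N).continuousOn)
  obtain ⟨xm, hxm, hxmmin'⟩ := hicc.exists_isMinOn hne ((hWcont N).continuousOn)
  set M₀ : ℝ := Wf N xM with hM₀def
  set m₀ : ℝ := Wf N xm with hm₀def
  have hxMmax : ∀ y ∈ Set.Icc A B, Wf N y ≤ M₀ := fun y hy => hxMmax' hy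
  have hxmmin : ∀ y ∈ Set.Icc A B, m₀ ≤ Wf N y := fun y hy => hxmmin' hy
  have hM₀pos : 0 < M₀ := hpos N le_rfl xM hxM
  have hm₀pos : 0 < m₀ := hpos N le_rfl xm hxm
  -- shifted summable sequence
  have hDD : Summable (fun j => C (j + N)) := (summable_nat_add_iff N).mpr hCsum
  set T : ℝ := ∑' j, C (j + N) with hTdef
  have hsumT : ∀ k, ∑ j ∈ Finset.range k, C (j + N) ≤ T :=
    fun k => Summable.sum_le_tsum _ (fun i _ => hC0 _) hDD
  have hT0 : 0 ≤ T := tsum_nonneg (fun j => hC0 _)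
  -- uniform upper bound
  have hupper : ∀ k, ∀ x ∈ Set.Icc A B,
      Wf (k + N) x ≤ M₀ * Real.exp ((2/ε) * ∑ j ∈ Finset.range k, C (j + N)) := by
    intro k
    induction k with
    | zero =>
      intro x hx
      simpa using hxMmax x hx
    | succ k ih =>
      intro x hx
      have h1 := hub (k + N) (Nat.le_add_left N k) x hx
      have h2 := ih x hx
      calc Wf (k + 1 + N) x = Wf ((k + N) + 1) x := by rw [Nat.add_right_comm]
        _ ≤ Wf (k + N) x * Real.exp (2 * (C (k + N)/ε)) := h1
        _ ≤ (M₀ * Real.exp ((2/ε) * ∑ j ∈ Finset.range k, C (j + N)))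
              * Real.exp (2 * (C (k + N)/ε)) :=
            mul_le_mul_of_nonneg_right h2 (Real.exp_pos _).le
        _ = M₀ * Real.exp ((2/ε) * ∑ j ∈ Finset.range (k+1), C (j + N)) := by
            rw [Finset.sum_range_succ, mul_assoc, ← Real.exp_add]
            congr 2
            ring
  set M : ℝ := M₀ * Real.exp ((2/ε) * T) with hMdef
  have hMpos : 0 < M := mul_pos hM₀pos (Real.exp_pos _)
  have hWle : ∀ k, ∀ x ∈ Set.Icc A B, Wf (k + N) x ≤ M := by
    intro k x hx
    refine (hupper k x hx).trans ?_
    rw [hMdef]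
    refine mul_le_mul_of_nonneg_left (Real.exp_le_exp.2 ?_) hM₀pos.le
    exact mul_le_mul_of_nonneg_left (hsumT k) (by positivity)
  have hWleN : ∀ n, N ≤ n → ∀ x ∈ Set.Icc A B, Wf n x ≤ M := by
    intro n hn x hx
    obtain ⟨k, rfl⟩ : ∃ k, n = k + N := ⟨n - N, (Nat.sub_add_cancel hn).symm⟩
    exact hWle k x hx
  -- uniform lower bound
  have hlowerk : ∀ k, ∀ x ∈ Set.Icc A B,
      m₀ ≤ Wf (k + N) x * Real.exp ((1/ε) * ∑ j ∈ Finset.range k, C (j + N)) := by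
    intro k
    induction k with
    | zero =>
      intro x hx
      simpa using hxmmin x hx
    | succ k ih =>
      intro x hx
      have h1 := hlb (k + N) (Nat.le_add_left N k) x hx
      calc m₀ ≤ Wf (k + N) x * Real.exp ((1/ε) * ∑ j ∈ Finset.range k, C (j + N)) := ih x hx
        _ ≤ (Wf ((k + N) + 1) x * Real.exp (C (k + N)/ε))
              * Real.exp ((1/ε) * ∑ j ∈ Finset.range k, C (j + N)) :=
            mul_le_mul_of_nonneg_right h1 (Real.exp_pos _).le
        _ = Wf (k + 1 + N) x * Real.exp ((1/ε) * ∑ j ∈ Finset.range (k+1), C (j + N)) := by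
            rw [Nat.add_right_comm k 1 N, Finset.sum_range_succ, mul_assoc, ← Real.exp_add]
            congr 2
            ring
  set μ : ℝ := m₀ * Real.exp (-((1/ε) * T)) with hμdef
  have hμpos : 0 < μ := mul_pos hm₀pos (Real.exp_pos _)
  have hWge : ∀ k, ∀ x ∈ Set.Icc A B, μ ≤ Wf (k + N) x := by
    intro k x hx
    have hWk : 0 ≤ Wf (k + N) x := (hpos (k + N) (Nat.le_add_left N k) x hx).le
    have h1 : m₀ ≤ Wf (k + N) x * Real.exp ((1/ε) * T) := by
      refine (hlowerk k x hx).trans ?_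
      exact mul_le_mul_of_nonneg_left (Real.exp_le_exp.2
        (mul_le_mul_of_nonneg_left (hsumT k) (by positivity))) hWk
    calc μ = m₀ * Real.exp (-((1/ε) * T)) := hμdef
    _ ≤ (Wf (k + N) x * Real.exp ((1/ε) * T)) * Real.exp (-((1/ε) * T)) :=
        mul_le_mul_of_nonneg_right h1 (Real.exp_pos _).le
    _ = Wf (k + N) x := by
        rw [mul_assoc, ← Real.exp_add, add_neg_cancel, Real.exp_zero, mul_one]
  -- the telescoping series
  set g : ℕ → ℝ → ℝ := fun j x => Wf (j + 1 + N) x - Wf (j + N) x with hgdef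
  set dseq : ℕ → ℝ := fun j => (C (j + N)/ε) * M with hdseqdef
  have hdsum : Summable dseq := by
    rw [hdseqdef]
    exact (hDD.div_const ε).mul_right M
  have hgbound : ∀ j x, x ∈ Set.Icc A B → ‖g j x‖ ≤ dseq j := by
    intro j x hx
    simp only [hgdef, hdseqdef, Real.norm_eq_abs]
    have h1 : |Wf ((j + N) + 1) x - Wf (j + N) x| ≤ (C (j + N)/ε) * Wf ((j + N) + 1) x :=
      hdiff2 (j + N) (Nat.le_add_left N j) x hx
    have h2 : Wf ((j + N) + 1) x ≤ M := by
      have h := hWle (j + 1) x hx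
      rwa [Nat.add_right_comm j 1 N] at h
    calc |Wf (j + 1 + N) x - Wf (j + N) x|
        = |Wf ((j + N) + 1) x - Wf (j + N) x| := by rw [Nat.add_right_comm j 1 N]
      _ ≤ (C (j + N)/ε) * Wf ((j + N) + 1) x := h1
      _ ≤ (C (j + N)/ε) * M := mul_le_mul_of_nonneg_left h2 (div_nonneg (hC0 _) hε.le)
  have hU := tendstoUniformlyOn_tsum_nat hdsum hgbound
  set Δf : ℝ → ℝ := fun x => Wf N x + ∑' j, g j x with hΔdef
  have hdecomp : ∀ k x, Wf N x + ∑ j ∈ Finset.range k, g j x = Wf (k + N) x := by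
    intro k x
    have h : ∑ j ∈ Finset.range k, g j x = Wf (k + N) x - Wf (0 + N) x := by
      simp only [hgdef]
      exact Finset.sum_range_sub (fun j => Wf (j + N) x) k
    rw [h]
    simp only [Nat.zero_add]
    ring
  have hU' : TendstoUniformlyOn (fun k x => Wf (k + N) x) Δf atTop (Set.Icc A B) := by
    rw [Metric.tendstoUniformlyOn_iff] at hU ⊢
    intro ε' hε'
    filter_upwards [hU ε' hε'] with k hk x hx
    have h1 := hk x hx
    rw [Real.dist_eq] at h1 ⊢
    rw [← hdecomp k x]
    simp only [hΔdef]
    have heq : (Wf N x + ∑' j, g j x) - (Wf N x + ∑ j ∈ Finset.range k, g j x)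
        = (∑' j, g j x) - ∑ j ∈ Finset.range k, g j x := by ring
    rw [heq]
    exact h1
  have hΔcont : ContinuousOn Δf (Set.Icc A B) :=
    hU'.continuousOn (Filter.Eventually.of_forall fun k => (hWcont (k + N)).continuousOn).frequently
  have hΔpos : ∀ x ∈ Set.Icc A B, 0 < Δf x := by
    intro x hx
    have hlim := hU'.tendsto_at hx
    have h : μ ≤ Δf x := ge_of_tendsto' hlim (fun k => hWge k x hx)
    linarith
  -- the error sequence for Δ_n - W_{n+1}
  set e : ℕ → ℝ := fun n => |1 - b n / b (n+1)|
      + (K * |1/b n - 1/b (n+1)| + |a n/b n - a (n+1)/b (n+1)|)/2 with hedef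
  have hee : ∀ n, 0 ≤ e n := by
    intro n
    simp only [hedef]
    positivity
  have he0 : Tendsto e atTop (nhds 0) := by
    have t1 : Tendsto (fun n : ℕ => |1 - b n / b (n+1)|) atTop (nhds 0) := by
      have h := h3.const_sub 1
      have h' := h.abs
      simpa using h'
    have t2 : Tendsto (fun n : ℕ => |1/b n - 1/b (n+1)|) atTop (nhds 0) := by
      have h := h4b.tendsto_atTop_zero
      simpa [abs_sub_comm] using h
    have t3 : Tendsto (fun n : ℕ => |a n/b n - a (n+1)/b (n+1)|) atTop (nhds 0) := by
      have h := h4c.tendsto_atTop_zero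
      simpa [abs_sub_comm] using h
    have h := t1.add (((t2.const_mul K).add t3).div_const 2)
    rw [hedef]
    simpa using h
  -- comparison of the Turán determinant with Wf
  have hFW : ∀ m, N ≤ m → ∀ x ∈ Set.Icc A B,
      |(b (m+1) * P (m+1) x ^ 2 - b m * P m x * P (m+2) x) - Wf (m+1) x|
        ≤ e (m+1) * (M/ε) := by
    intro m hm x hx
    have hb1 : b (m+1) ≠ 0 := (hb _).ne'
    have hb2 : b (m+2) ≠ 0 := (hb _).ne'
    set dβ : ℝ := 1 - b (m+1)/b (m+2) with hdβ
    set dτ : ℝ := (x - a (m+1))/b (m+1) - (x - a (m+2))/b (m+2) with hdτ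
    have hsub : b m * P m x = (x - a (m+1)) * P (m+1) x - b (m+1) * P (m+2) x := by
      linarith [hPrec m x]
    have hF : (b (m+1) * P (m+1) x ^ 2 - b m * P m x * P (m+2) x) - Wf (m+1) x
        = b (m+1) * (dβ * (P (m+1) x)^2 - dτ * (P (m+1) x * P (m+2) x)) := by
      have hmul : b m * P m x * P (m+2) x
          = ((x - a (m+1)) * P (m+1) x - b (m+1) * P (m+2) x) * P (m+2) x := by rw [hsub]
      rw [hmul]
      simp only [hWf, hdβ, hdτ]
      field_simp
      ring
    have h2 := aux_quad_diff dβ dτ (P (m+1) x) (P (m+2) x)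
    have hτd : |dτ| ≤ K * |1/b (m+1) - 1/b (m+2)| + |a (m+1)/b (m+1) - a (m+2)/b (m+2)| := by
      have hrepr : dτ = x * (1/b (m+1) - 1/b (m+2)) - (a (m+1)/b (m+1) - a (m+2)/b (m+2)) := by
        simp only [hdτ]
        field_simp
        ring
      rw [hrepr]
      refine (abs_sub _ _).trans ?_
      rw [abs_mul]
      have := mul_le_mul_of_nonneg_right (hK x hx) (abs_nonneg (1/b (m+1) - 1/b (m+2)))
      linarith
    have h3 : |dβ| + |dτ|/2 ≤ e (m+1) := by
      simp only [hedef, hdβ]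
      linarith
    have hS : b (m+1) * ((P (m+1) x)^2 + (P (m+2) x)^2) ≤ M/ε := by
      rw [le_div_iff₀ hε]
      have hl := hlow (m+1) (le_trans hm (Nat.le_succ m)) x hx
      have hu := hWleN (m+1) (le_trans hm (Nat.le_succ m)) x hx
      linarith
    calc |(b (m+1) * P (m+1) x ^ 2 - b m * P m x * P (m+2) x) - Wf (m+1) x|
        = b (m+1) * |dβ * (P (m+1) x)^2 - dτ * (P (m+1) x * P (m+2) x)| := by
          rw [hF, abs_mul, abs_of_pos (hb (m+1))]
      _ ≤ b (m+1) * ((|dβ| + |dτ|/2) * ((P (m+1) x)^2 + (P (m+2) x)^2)) :=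
          mul_le_mul_of_nonneg_left h2 (hb _).le
      _ = (|dβ| + |dτ|/2) * (b (m+1) * ((P (m+1) x)^2 + (P (m+2) x)^2)) := by ring
      _ ≤ e (m+1) * (M/ε) :=
          mul_le_mul h3 hS (mul_nonneg (hb _).le (by positivity)) (hee _)
  -- final assembly
  refine ⟨Δf, hΔcont, hΔpos, ?_⟩
  rw [Metric.tendstoUniformlyOn_iff]
  intro ε' hε'
  rw [Metric.tendstoUniformlyOn_iff] at hU'
  obtain ⟨k₀, hk₀⟩ := eventually_atTop.1 (hU' (ε'/2) (by linarith))
  set Bd : ℝ := M/ε + 1 with hBddef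
  have hMε : 0 < M/ε := div_pos hMpos hε
  have hBdpos : 0 < Bd := by rw [hBddef]; linarith
  have hev := he0.eventually (eventually_lt_nhds (show (0:ℝ) < (ε'/2)/Bd from
    div_pos (by linarith) hBdpos))
  filter_upwards [hev, eventually_ge_atTop (k₀ + N), eventually_ge_atTop (N + 1)]
    with n hen hn1 hn2 x hx
  obtain ⟨m, rfl⟩ : ∃ m, n = m + 1 := ⟨n - 1, by omega⟩
  have hm : N ≤ m := by omega
  have hd1 : |Δf x - Wf (m+1) x| < ε'/2 := by
    have hk : k₀ ≤ (m+1) - N := by omega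
    have h := hk₀ ((m+1) - N) hk x hx
    rw [Real.dist_eq] at h
    have hNk : (m+1) - N + N = m + 1 := by omega
    rwa [hNk] at h
  have hd2 : |(b (m+1) * P (m+1) x ^ 2 - b m * P m x * P (m+2) x) - Wf (m+1) x| < ε'/2 := by
    refine lt_of_le_of_lt (hFW m hm x hx) ?_
    have h1 : e (m+1) * (M/ε) ≤ e (m+1) * Bd :=
      mul_le_mul_of_nonneg_left (by rw [hBddef]; linarith) (hee _)
    have h2 : e (m+1) * Bd < ((ε'/2)/Bd) * Bd := mul_lt_mul_of_pos_right hen hBdpos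
    have h3 : ((ε'/2)/Bd) * Bd = ε'/2 := div_mul_cancel₀ _ hBdpos.ne'
    linarith
  rw [Real.dist_eq]
  simp only [Nat.add_sub_cancel]
  show |Δf x - (b (m+1) * P (m+1) x ^ 2 - b m * P m x * P (m+2) x)| < ε'
  have htri := abs_sub_le (Δf x) (Wf (m+1) x)
      (b (m+1) * P (m+1) x ^ 2 - b m * P m x * P (m+2) x)
  have hcomm : |Wf (m+1) x - (b (m+1) * P (m+1) x ^ 2 - b m * P m x * P (m+2) x)|
      = |(b (m+1) * P (m+1) x ^ 2 - b m * P m x * P (m+2) x) - Wf (m+1) x| :=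
    abs_sub_comm _ _
  linarith
end
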